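/- arXiv:math/0605462 — 5 statements merged into one kernel-verified Lean document; each statement's English description precedes it below -/
import Mathlib

section
/- Let X_m be a chi-squared random variable with m degrees of freedom and let d > 0. Then P(X_m ≥ (1+d)m) ≤ (1/2)·exp(−(m/2)·(d − log(1+d))). -/
open MeasureTheory ProbabilityTheory Real Set
open scoped NNReal ENNReal

section Aux

lemma log_le_half_sub_inv {x : ℝ} (hx : 1 ≤ x) : Real.log x ≤ (x - x⁻¹) / 2 := by
  have hx0 : 0 < x := lt_of_lt_of_le one_pos hx
  have hlog : 0 ≤ Real.log x := Real.log_nonneg hx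
  have h : Real.log x ≤ Real.sinh (Real.log x) := by
    rcases eq_or_lt_of_le hlog with h | h
    · rw [← h]; simp
    · exact (Real.self_lt_sinh_iff.2 h).le
  rwa [Real.sinh_eq, Real.exp_log hx0, Real.exp_neg, Real.exp_log hx0] at h

lemma jac_pointwise {m : ℕ} (hm : 1 ≤ m) {v : ℝ} (hv : 0 < v) (hvb : v ≤ Real.sqrt m) :
    ((m:ℝ) / v ^ 2) * (((m:ℝ) / v) ^ (m-1) * Real.exp (-((m:ℝ)/v) ^ 2 / 2))
      ≤ v ^ (m-1) * Real.exp (-v ^ 2 / 2) := by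
  have hm0 : (0:ℝ) < m := by exact_mod_cast hm
  have hv2 : v ^ 2 ≤ m := by
    have h1 : Real.sqrt m ^ 2 = m := Real.sq_sqrt hm0.le
    nlinarith [Real.sqrt_nonneg (m:ℝ)]
  set x : ℝ := (m:ℝ) / v ^ 2 with hxdef
  have hx1 : 1 ≤ x := (one_le_div (by positivity)).2 hv2
  have hx0 : 0 < x := lt_of_lt_of_le one_pos hx1
  have hlog := log_le_half_sub_inv hx1
  have hmul : (m:ℝ) * Real.log x ≤ (m:ℝ)^2 / (2*v^2) - v^2/2 := by
    have h2 : (m:ℝ) * Real.log x ≤ (m:ℝ) * ((x - x⁻¹)/2) :=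
      mul_le_mul_of_nonneg_left hlog hm0.le
    have hxinv : x⁻¹ = v^2 / m := by
      rw [hxdef]; field_simp
    calc (m:ℝ) * Real.log x ≤ (m:ℝ) * ((x - x⁻¹)/2) := h2
      _ = (m:ℝ)^2 / (2*v^2) - v^2/2 := by
          rw [hxinv, hxdef]; field_simp
  have hxm : x ^ m ≤ Real.exp ((m:ℝ)^2 / (2*v^2) - v^2/2) := by
    have h3 := Real.exp_le_exp.2 hmul
    rwa [Real.exp_nat_mul, Real.exp_log hx0] at h3
  have hexp : x ^ m * Real.exp (-(m:ℝ)^2/(2*v^2)) ≤ Real.exp (-v^2/2) := by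
    have h4 : x ^ m * Real.exp (-(m:ℝ)^2/(2*v^2))
        ≤ Real.exp ((m:ℝ)^2 / (2*v^2) - v^2/2) * Real.exp (-(m:ℝ)^2/(2*v^2)) :=
      mul_le_mul_of_nonneg_right hxm (Real.exp_nonneg _)
    calc x ^ m * Real.exp (-(m:ℝ)^2/(2*v^2))
        ≤ Real.exp ((m:ℝ)^2 / (2*v^2) - v^2/2) * Real.exp (-(m:ℝ)^2/(2*v^2)) := h4
      _ = Real.exp (-v^2/2) := by rw [← Real.exp_add]; ring_nf
  obtain ⟨k, rfl⟩ : ∃ k, m = k + 1 := ⟨m-1, (Nat.succ_pred_eq_of_pos hm).symm⟩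
  have hk : k + 1 - 1 = k := rfl
  rw [hk]
  have hvne : v ≠ 0 := hv.ne'
  have hargeq : -(((k+1:ℕ):ℝ)/v) ^ 2 / 2 = -(((k+1:ℕ):ℝ))^2/(2*v^2) := by
    field_simp
  rw [hargeq]
  have hcoef : (((k+1:ℕ):ℝ) / v^2) * (((k+1:ℕ):ℝ)/v) ^ k = v ^ k * x ^ (k+1) := by
    rw [hxdef]
    rw [div_pow, div_pow]
    field_simp
    ring
  calc (((k+1:ℕ):ℝ) / v ^ 2) * ((((k+1:ℕ):ℝ) / v) ^ k * Real.exp (-(((k+1:ℕ):ℝ))^2/(2*v^2)))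
      = v ^ k * (x ^ (k+1) * Real.exp (-(((k+1:ℕ):ℝ))^2/(2*v^2))) := by
        rw [← mul_assoc, hcoef]; ring
    _ ≤ v ^ k * Real.exp (-v^2/2) := by
        apply mul_le_mul_of_nonneg_left _ (by positivity)
        exact hexp

lemma f_integrableOn (m : ℕ) :
    IntegrableOn (fun u : ℝ => u^(m-1) * Real.exp (-u^2/2)) (Ioi 0) volume := by
  have h := integrable_rpow_mul_exp_neg_mul_sq (b := (1/2:ℝ)) (by norm_num)
    (s := ((m-1 : ℕ):ℝ)) (lt_of_lt_of_le neg_one_lt_zero (Nat.cast_nonneg _))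
  have heq : (fun u : ℝ => u ^ (((m-1:ℕ)):ℝ) * Real.exp (-(1/2) * u^2))
      = fun u : ℝ => u^(m-1) * Real.exp (-u^2/2) := by
    funext u
    rw [Real.rpow_natCast]
    ring_nf
  rw [heq] at h
  exact h.integrableOn

lemma twoJ_le {m : ℕ} (hm : 1 ≤ m) :
    2 * (∫ u in Ioi (0:ℝ), (Ici (Real.sqrt m)).indicator
          (fun u => u^(m-1) * Real.exp (-u^2/2)) u)
      ≤ ∫ u in Ioi (0:ℝ), u^(m-1) * Real.exp (-u^2/2) := by
  have hm0 : (0:ℝ) < m := by exact_mod_cast hm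
  set b : ℝ := Real.sqrt m with hbdef
  have hb0 : 0 < b := Real.sqrt_pos.2 hm0
  have hb2 : b ^ 2 = m := Real.sq_sqrt hm0.le
  set f : ℝ → ℝ := fun u => u^(m-1) * Real.exp (-u^2/2) with hfdef
  have hfnn : ∀ u : ℝ, 0 ≤ u → 0 ≤ f u := fun u hu => by
    simp only [hfdef]; positivity
  set g : ℝ → ℝ := (Ici b).indicator f with hgdef
  set g' : ℝ → ℝ := (Iio b).indicator f with hg'def
  have hgnn : ∀ u : ℝ, 0 ≤ u → 0 ≤ g u := fun u hu => by
    simp only [hgdef]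
    exact Set.indicator_nonneg (fun x hx => hfnn x (le_trans hb0.le hx)) u
  have hfint : IntegrableOn f (Ioi 0) volume := f_integrableOn m
  have hgint : IntegrableOn g (Ioi 0) volume := hfint.indicator measurableSet_Ici
  have hg'int : IntegrableOn g' (Ioi 0) volume := hfint.indicator measurableSet_Iio
  set h : ℝ → ℝ := fun x => (|(-1:ℝ)| * x ^ ((-1:ℝ) - 1)) • g (x ^ (-1:ℝ)) with hhdef
  have h1 : ∫ x in Ioi (0:ℝ), h x = ∫ u in Ioi (0:ℝ), g u :=
    integral_comp_rpow_Ioi g (by norm_num)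
  have h2 : ∫ x in Ioi (0:ℝ), h ((m:ℝ)⁻¹ * x) = ((m:ℝ)⁻¹)⁻¹ • ∫ x in Ioi (0:ℝ), h x := by
    have := integral_comp_mul_left_Ioi h 0 (inv_pos.2 hm0)
    rwa [mul_zero] at this
  have hkey : ∀ v : ℝ, 0 < v → v ≠ b → (m:ℝ)⁻¹ • h ((m:ℝ)⁻¹ * v) ≤ g' v := by
    intro v hv hvb
    have hx : (0:ℝ) < (m:ℝ)⁻¹ * v := by positivity
    have hrw1 : ((m:ℝ)⁻¹ * v) ^ ((-1:ℝ)) = (m:ℝ) / v := by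
      rw [Real.rpow_neg_one]
      rw [mul_inv, inv_inv]
      ring
    have hrw2 : ((m:ℝ)⁻¹ * v) ^ ((-1:ℝ) - 1) = ((m:ℝ)/v) ^ 2 := by
      have : ((-1:ℝ) - 1) = -(2:ℕ) := by norm_num
      rw [this, Real.rpow_neg hx.le, Real.rpow_natCast]
      rw [div_pow, mul_pow]
      field_simp
    have hh : (m:ℝ)⁻¹ • h ((m:ℝ)⁻¹ * v) = ((m:ℝ) / v^2) * g ((m:ℝ)/v) := by
      simp only [hhdef, hrw1, hrw2, abs_neg, abs_one, one_mul, smul_eq_mul]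
      rw [div_pow]
      field_simp
    rw [hh]
    rcases lt_or_gt_of_ne hvb with hlt | hgt
    · have hmem : (m:ℝ)/v ∈ Ici b := by
        rw [mem_Ici, le_div_iff₀ hv]
        nlinarith
      have hg_eq : g ((m:ℝ)/v) = f ((m:ℝ)/v) := by
        rw [hgdef, Set.indicator_of_mem hmem]
      have hg'_eq : g' v = f v := by
        rw [hg'def, Set.indicator_of_mem (mem_Iio.2 hlt)]
      rw [hg_eq, hg'_eq]
      have := jac_pointwise hm hv (le_of_lt (hlt.trans_le (le_refl b)))
      simpa [hfdef] using this
    · have hnot : (m:ℝ)/v ∉ Ici b := by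
        rw [mem_Ici, not_le, div_lt_iff₀ hv]
        nlinarith
      have hg_eq : g ((m:ℝ)/v) = 0 := by rw [hgdef, Set.indicator_of_notMem hnot]
      have hg'_eq : g' v = 0 := by
        rw [hg'def, Set.indicator_of_notMem (by simpa using hgt.le)]
      rw [hg_eq, hg'_eq, mul_zero]
  have hae : (fun x => (m:ℝ)⁻¹ • h ((m:ℝ)⁻¹ * x)) ≤ᵐ[volume.restrict (Ioi 0)] g' := by
    have hne : ∀ᵐ v ∂(volume.restrict (Ioi (0:ℝ))), v ≠ b := by
      rw [ae_iff]
      have : {v : ℝ | ¬ v ≠ b} = {b} := by ext v; simp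
      rw [this, Measure.restrict_apply (measurableSet_singleton b)]
      exact measure_mono_null Set.inter_subset_left (by simp)
    filter_upwards [ae_restrict_mem measurableSet_Ioi, hne] with v hv hvb
    exact hkey v hv hvb
  have hnn : 0 ≤ᵐ[volume.restrict (Ioi 0)] (fun x => (m:ℝ)⁻¹ • h ((m:ℝ)⁻¹ * x)) := by
    filter_upwards [ae_restrict_mem measurableSet_Ioi] with v hv
    have hx : (0:ℝ) < (m:ℝ)⁻¹ * v := mul_pos (inv_pos.2 hm0) hv
    have : 0 ≤ h ((m:ℝ)⁻¹ * v) := by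
      simp only [hhdef]
      apply mul_nonneg
      · apply mul_nonneg (abs_nonneg _)
        exact Real.rpow_nonneg hx.le _
      · exact hgnn _ (Real.rpow_nonneg hx.le _)
    exact smul_nonneg (by positivity) this
  have hmono : ∫ x in Ioi (0:ℝ), (m:ℝ)⁻¹ • h ((m:ℝ)⁻¹ * x) ≤ ∫ x in Ioi (0:ℝ), g' x :=
    integral_mono_of_nonneg hnn hg'int hae
  have hJJ' : ∫ u in Ioi (0:ℝ), g u ≤ ∫ x in Ioi (0:ℝ), g' x := by
    rw [← h1]
    have : ∫ x in Ioi (0:ℝ), h x = ∫ x in Ioi (0:ℝ), (m:ℝ)⁻¹ • h ((m:ℝ)⁻¹ * x) := by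
      rw [integral_smul, h2, smul_smul]
      rw [inv_inv]
      rw [inv_mul_cancel₀ hm0.ne', one_smul]
    rw [this]
    exact hmono
  have hsum : (∫ u in Ioi (0:ℝ), g u) + (∫ x in Ioi (0:ℝ), g' x) = ∫ u in Ioi (0:ℝ), f u := by
    rw [← integral_add hgint hg'int]
    apply setIntegral_congr_fun measurableSet_Ioi
    intro u _
    by_cases hu : b ≤ u
    · simp [hgdef, hg'def, Set.indicator_apply, hu, not_lt.2 hu]
    · simp [hgdef, hg'def, Set.indicator_apply, hu, lt_of_not_ge hu]
  linarith

lemma scaling_lemma {m : ℕ} (hm : 1 ≤ m) {d : ℝ} (hd : 0 < d) :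
    ∫ u in Ioi (0:ℝ), (Ici (Real.sqrt ((1+d)*m))).indicator
        (fun u => u^(m-1) * Real.exp (-u^2/(2*(1+d)))) u
    = (Real.sqrt (1+d))^m *
      ∫ u in Ioi (0:ℝ), (Ici (Real.sqrt m)).indicator
        (fun u => u^(m-1) * Real.exp (-u^2/2)) u := by
  have hd1 : (0:ℝ) < 1 + d := by linarith
  set c : ℝ := Real.sqrt (1+d) with hcdef
  have hc : 0 < c := Real.sqrt_pos.2 hd1
  have hc2 : c ^ 2 = 1 + d := Real.sq_sqrt hd1.le
  set F : ℝ → ℝ := (Ici (Real.sqrt ((1+d)*m))).indicator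
      (fun u => u^(m-1) * Real.exp (-u^2/(2*(1+d)))) with hFdef
  set G : ℝ → ℝ := (Ici (Real.sqrt m)).indicator
      (fun u => u^(m-1) * Real.exp (-u^2/2)) with hGdef
  have hsplit : Real.sqrt ((1+d)*m) = c * Real.sqrt m := Real.sqrt_mul hd1.le m
  have hFc : ∀ x : ℝ, F (c * x) = c^(m-1) * G x := by
    intro x
    have hmem : (c * x ∈ Ici (Real.sqrt ((1+d)*m))) ↔ (x ∈ Ici (Real.sqrt m)) := by
      rw [mem_Ici, mem_Ici, hsplit, mul_le_mul_iff_right₀ hc]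
    have hval : (c*x)^(m-1) * Real.exp (-(c*x)^2/(2*(1+d)))
        = c^(m-1) * (x^(m-1) * Real.exp (-x^2/2)) := by
      rw [mul_pow, mul_pow, hc2]
      have : -((1+d) * x^2)/(2*(1+d)) = -x^2/2 := by
        field_simp
      rw [this]; ring
    by_cases hx : x ∈ Ici (Real.sqrt m)
    · rw [hFdef, hGdef, Set.indicator_of_mem (hmem.2 hx), Set.indicator_of_mem hx, hval]
    · rw [hFdef, hGdef, Set.indicator_of_notMem (fun hmm => hx (hmem.1 hmm)),
        Set.indicator_of_notMem hx, mul_zero]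
  have hsub := integral_comp_mul_left_Ioi F 0 hc
  rw [mul_zero] at hsub
  have : ∫ x in Ioi (0:ℝ), F (c * x) = c^(m-1) * ∫ x in Ioi (0:ℝ), G x := by
    simp_rw [hFc]
    exact MeasureTheory.integral_const_mul _ _
  rw [this] at hsub
  have hKJ : ∫ u in Ioi (0:ℝ), F u = c • (c^(m-1) * ∫ x in Ioi (0:ℝ), G x) := by
    rw [hsub, smul_smul, mul_inv_cancel₀ hc.ne', one_smul]
  rw [hKJ, smul_eq_mul, ← mul_assoc, ← pow_succ']
  rw [Nat.sub_add_cancel hm]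

lemma pi_gaussian_withDensity (m : ℕ) :
    Measure.pi (fun _ : Fin m => gaussianReal 0 1)
      = (volume : Measure (Fin m → ℝ)).withDensity
          (fun x => ENNReal.ofReal (∏ i, gaussianPDFReal 0 1 (x i))) := by
  refine Measure.pi_eq fun s hs => ?_
  rw [withDensity_apply _ (MeasurableSet.univ_pi hs)]
  have hind : ∀ x : Fin m → ℝ,
      (univ.pi s).indicator (fun x => ENNReal.ofReal (∏ i, gaussianPDFReal 0 1 (x i))) x
        = ENNReal.ofReal (∏ i, (s i).indicator (gaussianPDFReal 0 1) (x i)) := by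
    intro x
    by_cases hx : x ∈ univ.pi s
    · rw [Set.indicator_of_mem hx]
      congr 1
      exact Finset.prod_congr rfl fun i _ =>
        (Set.indicator_of_mem (hx i (Set.mem_univ i)) _).symm
    · rw [Set.indicator_of_notMem hx]
      have : ¬ ∀ i, x i ∈ s i := fun hall => hx (fun i _ => hall i)
      obtain ⟨i, hi⟩ := not_forall.1 this
      rw [Finset.prod_eq_zero (Finset.mem_univ i) (Set.indicator_of_notMem hi _)]
      simp
  rw [← lintegral_indicator (MeasurableSet.univ_pi hs)]
  simp_rw [hind]
  have hint : Integrable (fun x : Fin m → ℝ => ∏ i, (s i).indicator (gaussianPDFReal 0 1) (x i)) := by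
    exact Integrable.fintype_prod fun i => (integrable_gaussianPDFReal 0 1).indicator (hs i)
  rw [← ofReal_integral_eq_lintegral_ofReal hint]
  · rw [integral_fintype_prod_volume_eq_prod (f := fun (_ : Fin m) => (s _).indicator (gaussianPDFReal 0 1))]
    rw [ENNReal.ofReal_prod_of_nonneg fun i _ => integral_nonneg fun x =>
      Set.indicator_nonneg (fun y _ => gaussianPDFReal_nonneg 0 1 y) _]
    refine Finset.prod_congr rfl fun i _ => ?_
    rw [integral_indicator (hs i), gaussianReal_apply_eq_integral 0 one_ne_zero (s i)]
  · exact ae_of_all _ fun x => Finset.prod_nonneg fun i _ =>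
      Set.indicator_nonneg (fun y _ => gaussianPDFReal_nonneg 0 1 y) _

lemma map_eq_pi {Ω : Type*} [MeasurableSpace Ω] (μ : Measure Ω) [IsProbabilityMeasure μ]
    (m : ℕ) (Z : Fin m → Ω → ℝ) (hmeas : ∀ i, Measurable (Z i))
    (hindep : iIndepFun Z μ)
    (hgauss : ∀ i, Measure.map (Z i) μ = gaussianReal 0 1) :
    Measure.map (fun ω i => Z i ω) μ = Measure.pi (fun _ : Fin m => gaussianReal 0 1) := by
  refine (Measure.pi_eq fun s hs => ?_).symm
  rw [Measure.map_apply (measurable_pi_lambda _ hmeas) (MeasurableSet.univ_pi hs)]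
  have hpre : (fun ω i => Z i ω) ⁻¹' (univ.pi s) = ⋂ i ∈ Finset.univ, Z i ⁻¹' s i := by
    ext ω; simp [Set.mem_univ_pi]
  rw [hpre, hindep.measure_inter_preimage_eq_mul Finset.univ (fun i _ => hs i)]
  exact Finset.prod_congr rfl fun i _ => by
    rw [← hgauss i, Measure.map_apply (hmeas i) (hs i)]

end Aux

/-- Chi-squared upper tail bound: if `X_m = Z_1^2 + ... + Z_m^2` with `Z_i` i.i.d. standard
normal, then for `d > 0`,
`P(X_m ≥ (1+d) m) ≤ (1/2) exp(-(m/2)(d - log(1+d)))`. -/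
theorem chi_squared_upper_tail
    {Ω : Type*} [MeasurableSpace Ω] (μ : Measure Ω) [IsProbabilityMeasure μ]
    (m : ℕ) (hm : 1 ≤ m) (Z : Fin m → Ω → ℝ)
    (hmeas : ∀ i, Measurable (Z i))
    (hindep : iIndepFun Z μ)
    (hgauss : ∀ i, Measure.map (Z i) μ = gaussianReal 0 1)
    (d : ℝ) (hd : 0 < d) :
    (μ {ω | (1 + d) * m ≤ ∑ i, (Z i ω) ^ 2}).toReal ≤
      (1 / 2) * Real.exp (-(m / 2 : ℝ) * (d - Real.log (1 + d))) := by
  classical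
  have hd1 : (0:ℝ) < 1 + d := by linarith
  have hm0 : (0:ℝ) < m := by exact_mod_cast hm
  set t : ℝ := d / (2*(1+d)) with htdef
  have ht0 : 0 < t := by positivity
  have hthalf : t - 1/2 = -(1/(2*(1+d))) := by
    rw [htdef]; field_simp; ring
  set a : ℝ := (1+d) * m with hadef
  have ha0 : 0 < a := by positivity
  have hta : t * a = d * m / 2 := by
    rw [htdef, hadef]; field_simp
  set ν := Measure.pi (fun _ : Fin m => gaussianReal 0 1) with hνdef
  have hsum_meas : Measurable fun x : Fin m → ℝ => ∑ i, (x i)^2 :=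
    Finset.measurable_sum _ fun i _ => (measurable_pi_apply i).pow_const 2
  set A : Set (Fin m → ℝ) := {x | a ≤ ∑ i, (x i)^2} with hAdef
  have hA : MeasurableSet A := measurableSet_le measurable_const hsum_meas
  have hFmeas : Measurable fun (ω:Ω) (i : Fin m) => Z i ω := measurable_pi_lambda _ hmeas
  have hmap := map_eq_pi μ m Z hmeas hindep hgauss
  have hset : {ω | (1 + d) * (m:ℝ) ≤ ∑ i, (Z i ω) ^ 2} = (fun ω i => Z i ω) ⁻¹' A := rfl
  rw [hset, ← Measure.map_apply hFmeas hA, hmap, ← hνdef]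
  -- constants and densities
  set Cm : ℝ := ((Real.sqrt (2*π))⁻¹)^m with hCmdef
  have hCm : 0 < Cm := by positivity
  have hpdf_eq : ∀ x:ℝ, gaussianPDFReal 0 1 x = (Real.sqrt (2*π))⁻¹ * Real.exp (-x^2/2) := by
    intro x; rw [gaussianPDFReal]; norm_num
  have hprod_radial : ∀ x : Fin m → ℝ,
      (∏ i, gaussianPDFReal 0 1 (x i)) = Cm * Real.exp (-(∑ i, (x i)^2)/2) := by
    intro x
    simp_rw [hpdf_eq]
    rw [Finset.prod_mul_distrib, Finset.prod_const, ← Real.exp_sum]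
    have h1 : ∑ i, -(x i)^2/2 = -(∑ i, (x i)^2)/2 := by
      rw [← Finset.sum_div, ← Finset.sum_neg_distrib]
    rw [h1]
    simp [hCmdef, Finset.card_univ]
  -- per-coordinate tilted density
  set ψ : ℝ → ℝ := fun z => gaussianPDFReal 0 1 z * Real.exp (t * z^2) with hψdef
  have hψ_eq : ∀ z:ℝ, ψ z = (Real.sqrt (2*π))⁻¹ * Real.exp (-(1/(2*(1+d))) * z^2) := by
    intro z
    rw [hψdef]
    simp only []
    rw [hpdf_eq, mul_assoc, ← Real.exp_add]
    congr 1
    have : -z^2/2 + t*z^2 = (t - 1/2) * z^2 := by ring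
    rw [this, hthalf]
  have hψint : Integrable ψ := by
    have h1 : Integrable (fun z:ℝ => (Real.sqrt (2*π))⁻¹ *
        Real.exp (-(1/(2*(1+d))) * z^2)) volume :=
      (integrable_exp_neg_mul_sq (by positivity)).const_mul _
    exact h1.congr (ae_of_all _ fun z => (hψ_eq z).symm)
  set M : (Fin m → ℝ) → ℝ := fun x => Real.exp (-(t*a)) * ∏ i, ψ (x i) with hMdef
  have hMint : Integrable M volume := (Integrable.fintype_prod fun _ => hψint).const_mul _
  have hMnn : ∀ x, 0 ≤ M x := by
    intro x
    apply mul_nonneg (Real.exp_nonneg _)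
    exact Finset.prod_nonneg fun i _ =>
      mul_nonneg (gaussianPDFReal_nonneg 0 1 _) (Real.exp_nonneg _)
  have hWint : Integrable (A.indicator M) volume := hMint.indicator hA
  have hWnn : ∀ x, 0 ≤ A.indicator M x := fun x =>
    Set.indicator_nonneg (fun y _ => hMnn y) x
  -- relate M to the exponential-tilt form
  have hM_eq : ∀ x : Fin m → ℝ,
      (∏ i, gaussianPDFReal 0 1 (x i)) * Real.exp (t * (∑ i, (x i)^2) - t*a) = M x := by
    intro x
    have h1 : ∏ i, ψ (x i)
        = (∏ i, gaussianPDFReal 0 1 (x i)) * Real.exp (t * ∑ i, (x i)^2) := by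
      rw [hψdef]
      simp only []
      rw [Finset.prod_mul_distrib, ← Real.exp_sum, ← Finset.mul_sum]
    rw [hMdef]
    simp only []
    rw [h1, Real.exp_sub, Real.exp_neg]
    ring
  -- measurability helpers
  have hExpMeas : Measurable fun x : Fin m → ℝ =>
      ENNReal.ofReal (Real.exp (t * (∑ i, (x i)^2) - t*a)) :=
    (((hsum_meas.const_mul t).sub measurable_const).exp).ennreal_ofReal
  have hpdfProdMeas : Measurable fun x : Fin m → ℝ =>
      ENNReal.ofReal (∏ i, gaussianPDFReal 0 1 (x i)) :=
    (Finset.measurable_prod _ fun i _ =>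
      (measurable_gaussianPDFReal 0 1).comp (measurable_pi_apply i)).ennreal_ofReal
  -- Chernoff-type bound at the measure level
  have hνA : ν A ≤ ENNReal.ofReal (∫ x, A.indicator M x) := by
    have step2 : ∫⁻ x, A.indicator (fun _ => (1:ℝ≥0∞)) x ∂ν
        ≤ ∫⁻ x, A.indicator
            (fun x => ENNReal.ofReal (Real.exp (t * (∑ i, (x i)^2) - t*a))) x ∂ν := by
      apply lintegral_mono
      intro x
      by_cases hx : x ∈ A
      · rw [Set.indicator_of_mem hx, Set.indicator_of_mem hx]
        rw [show (1:ℝ≥0∞) = ENNReal.ofReal 1 by simp]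
        apply ENNReal.ofReal_le_ofReal
        apply Real.one_le_exp
        have hxA : a ≤ ∑ i, (x i)^2 := hx
        have := mul_le_mul_of_nonneg_left hxA ht0.le
        linarith
      · rw [Set.indicator_of_notMem hx, Set.indicator_of_notMem hx]
    have step3 : ∫⁻ x, A.indicator
          (fun x => ENNReal.ofReal (Real.exp (t * (∑ i, (x i)^2) - t*a))) x ∂ν
        = ∫⁻ x, ENNReal.ofReal (A.indicator M x) ∂volume := by
      rw [hνdef, pi_gaussian_withDensity m,
        lintegral_withDensity_eq_lintegral_mul _ hpdfProdMeas (hExpMeas.indicator hA)]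
      apply lintegral_congr
      intro x
      simp only [Pi.mul_apply]
      by_cases hx : x ∈ A
      · rw [Set.indicator_of_mem hx, Set.indicator_of_mem hx,
          ← ENNReal.ofReal_mul (Finset.prod_nonneg fun i _ => gaussianPDFReal_nonneg 0 1 _),
          hM_eq x]
      · rw [Set.indicator_of_notMem hx, Set.indicator_of_notMem hx, mul_zero,
          ENNReal.ofReal_zero]
    have step4 : ∫⁻ x, ENNReal.ofReal (A.indicator M x) ∂volume
        = ENNReal.ofReal (∫ x, A.indicator M x) :=
      (ofReal_integral_eq_lintegral_ofReal hWint (ae_of_all _ hWnn)).symm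
    calc ν A = ∫⁻ x, A.indicator (fun _ => (1:ℝ≥0∞)) x ∂ν := (lintegral_indicator_one hA).symm
      _ ≤ _ := step2
      _ = ENNReal.ofReal (∫ x, A.indicator M x) := step3.trans step4
  have hPle : (ν A).toReal ≤ ∫ x, A.indicator M x := by
    have h := ENNReal.toReal_mono ENNReal.ofReal_ne_top hνA
    rwa [ENNReal.toReal_ofReal (integral_nonneg hWnn)] at h
  -- move to the Euclidean space and use the polar-type radial formula
  haveI hNT : Nontrivial (EuclideanSpace ℝ (Fin m)) := by
    apply Module.nontrivial_of_finrank_pos (R := ℝ) (M := EuclideanSpace ℝ (Fin m))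
    rw [finrank_euclideanSpace_fin]; omega
  set c0 : ℝ := (volume (Metric.ball (0:EuclideanSpace ℝ (Fin m)) 1)).toReal with hc0def
  have hc00 : 0 ≤ c0 := ENNReal.toReal_nonneg
  have hradial : ∀ f : ℝ → ℝ, ∫ x : EuclideanSpace ℝ (Fin m), f ‖x‖
      = (m:ℝ) * c0 * ∫ y in Ioi (0:ℝ), y ^ (m-1) * f y := by
    intro f
    have h := integral_fun_norm_addHaar (volume : Measure (EuclideanSpace ℝ (Fin m))) f
    rw [finrank_euclideanSpace_fin] at h
    simp_rw [smul_eq_mul] at h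
    rw [h, nsmul_eq_mul, hc0def, measureReal_def]
    ring
  have htransfer : ∀ W : (Fin m → ℝ) → ℝ, ∫ x, W x
      = ∫ y : EuclideanSpace ℝ (Fin m), W ((MeasurableEquiv.toLp 2 (Fin m → ℝ)).symm y) :=
    fun W => ((EuclideanSpace.volume_preserving_symm_measurableEquiv_toLp (Fin m)).integral_comp
      (MeasurableEquiv.measurableEmbedding _) W).symm
  have hnormsq : ∀ y : EuclideanSpace ℝ (Fin m), (∑ i, (y i)^2) = ‖y‖^2 := by
    intro y
    rw [EuclideanSpace.norm_eq, Real.sq_sqrt (by positivity)]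
    simp [Real.norm_eq_abs, sq_abs]
  have hSeq : ∀ y : EuclideanSpace ℝ (Fin m),
      (∑ i, (((MeasurableEquiv.toLp 2 (Fin m → ℝ)).symm y) i)^2) = ‖y‖^2 := by
    intro y
    exact hnormsq y
  -- radial form of the indicator integrand
  have hW_rad : ∀ y : EuclideanSpace ℝ (Fin m),
      A.indicator M ((MeasurableEquiv.toLp 2 (Fin m → ℝ)).symm y)
        = (Ici (Real.sqrt a)).indicator
            (fun r => Real.exp (-(t*a)) * Cm * Real.exp (-r^2/2) * Real.exp (t*r^2)) ‖y‖ := by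
    intro y
    have hmemiff : ((MeasurableEquiv.toLp 2 (Fin m → ℝ)).symm y ∈ A)
        ↔ (‖y‖ ∈ Ici (Real.sqrt a)) := by
      rw [hAdef]
      simp only [mem_setOf_eq, mem_Ici, hSeq y]
      constructor
      · intro h
        have h2 := Real.sqrt_le_sqrt h
        rwa [Real.sqrt_sq (norm_nonneg y)] at h2
      · intro h
        have h2 := pow_le_pow_left₀ (Real.sqrt_nonneg a) h 2
        rwa [Real.sq_sqrt ha0.le] at h2
    by_cases hy : (MeasurableEquiv.toLp 2 (Fin m → ℝ)).symm y ∈ A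
    · rw [Set.indicator_of_mem hy, Set.indicator_of_mem (hmemiff.1 hy)]
      rw [← hM_eq _, hprod_radial, hSeq y, Real.exp_sub, Real.exp_neg]
      ring
    · rw [Set.indicator_of_notMem hy,
        Set.indicator_of_notMem (fun hmm => hy (hmemiff.2 hmm))]
  have hWres : ∫ x, A.indicator M x
      = (m:ℝ) * c0 * ∫ r in Ioi (0:ℝ), r^(m-1) *
          ((Ici (Real.sqrt a)).indicator
            (fun u => Real.exp (-(t*a)) * Cm * Real.exp (-u^2/2) * Real.exp (t*u^2)) r) := by
    rw [htransfer]
    simp_rw [hW_rad]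
    exact hradial _
  have hK1form : (∫ r in Ioi (0:ℝ), r^(m-1) *
        ((Ici (Real.sqrt a)).indicator
          (fun u => Real.exp (-(t*a)) * Cm * Real.exp (-u^2/2) * Real.exp (t*u^2)) r))
      = (Real.exp (-(t*a)) * Cm) * ∫ r in Ioi (0:ℝ), (Ici (Real.sqrt a)).indicator
          (fun u => u^(m-1) * Real.exp (-u^2/(2*(1+d)))) r := by
    rw [← MeasureTheory.integral_const_mul]
    apply setIntegral_congr_fun measurableSet_Ioi
    intro r _
    by_cases hr : r ∈ Ici (Real.sqrt a)
    · have hee : Real.exp (-r^2/2) * Real.exp (t*r^2) = Real.exp (-r^2/(2*(1+d))) := by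
        rw [← Real.exp_add]
        congr 1
        have h2 : -r^2/2 + t*r^2 = (t - 1/2) * r^2 := by ring
        rw [h2, hthalf]
        field_simp
      simp only [Set.indicator_of_mem hr]
      rw [← hee]
      ring
    · simp only [Set.indicator_of_notMem hr, mul_zero]
  -- normalization
  have hprodnn : ∀ x : Fin m → ℝ, 0 ≤ ∏ i, gaussianPDFReal 0 1 (x i) :=
    fun x => Finset.prod_nonneg fun i _ => gaussianPDFReal_nonneg 0 1 _
  have hnorm_int : Integrable (fun x : Fin m → ℝ => ∏ i, gaussianPDFReal 0 1 (x i)) volume :=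
    Integrable.fintype_prod fun _ => integrable_gaussianPDFReal 0 1
  have hone : (∫ x : Fin m → ℝ, ∏ i, gaussianPDFReal 0 1 (x i)) = 1 := by
    have h1 : ν univ = 1 := measure_univ
    rw [hνdef, pi_gaussian_withDensity m] at h1
    rw [withDensity_apply _ MeasurableSet.univ, Measure.restrict_univ] at h1
    rw [← ofReal_integral_eq_lintegral_ofReal hnorm_int (ae_of_all _ hprodnn)] at h1
    exact (ENNReal.ofReal_eq_one.1 h1)
  have hnorm_radial : (1:ℝ)
      = (m:ℝ) * c0 * (Cm * ∫ u in Ioi (0:ℝ), u^(m-1) * Real.exp (-u^2/2)) := by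
    rw [← hone, htransfer]
    have hpt : ∀ y : EuclideanSpace ℝ (Fin m),
        (∏ i, gaussianPDFReal 0 1 (((MeasurableEquiv.toLp 2 (Fin m → ℝ)).symm y) i))
          = Cm * Real.exp (-(‖y‖^2)/2) := by
      intro y
      rw [hprod_radial, hSeq y]
    simp_rw [hpt]
    rw [hradial (fun r => Cm * Real.exp (-(r^2)/2))]
    have : (fun r : ℝ => r^(m-1) * (Cm * Real.exp (-(r^2)/2)))
        = fun r : ℝ => Cm * (r^(m-1) * Real.exp (-r^2/2)) := by
      funext r; ring
    rw [show (∫ r in Ioi (0:ℝ), r^(m-1) * (Cm * Real.exp (-(r^2)/2)))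
        = ∫ r in Ioi (0:ℝ), Cm * (r^(m-1) * Real.exp (-r^2/2)) by rw [this]]
    rw [MeasureTheory.integral_const_mul]
  -- final combination
  set J := ∫ u in Ioi (0:ℝ), (Ici (Real.sqrt (m:ℝ))).indicator
      (fun u => u^(m-1) * Real.exp (-u^2/2)) u with hJdef
  set K0 := ∫ u in Ioi (0:ℝ), u^(m-1) * Real.exp (-u^2/2) with hK0def
  have h2J : 2 * J ≤ K0 := twoJ_le hm
  have hscale : (∫ r in Ioi (0:ℝ), (Ici (Real.sqrt a)).indicator
        (fun u => u^(m-1) * Real.exp (-u^2/(2*(1+d)))) r)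
      = (Real.sqrt (1+d))^m * J := by
    rw [hadef]
    exact scaling_lemma hm hd
  have hJnn : 0 ≤ J := setIntegral_nonneg measurableSet_Ioi fun u hu =>
    Set.indicator_nonneg (fun v hv => by
      have : 0 ≤ v := le_trans (Real.sqrt_nonneg _) hv
      positivity) u
  have hRHSexp : Real.exp (-((m:ℝ)/2) * (d - Real.log (1+d)))
      = Real.exp (-(t*a)) * (Real.sqrt (1+d))^m := by
    have hsq : (Real.sqrt (1+d))^m = Real.exp ((m:ℝ) * (Real.log (1+d)/2)) := by
      conv_lhs => rw [← Real.exp_log (Real.sqrt_pos.2 hd1)]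
      rw [← Real.exp_nat_mul, Real.log_sqrt hd1.le]
    rw [hsq, ← Real.exp_add, hta]
    congr 1
    ring
  have hDCm : 0 ≤ (m:ℝ) * c0 * Cm := by
    apply mul_nonneg (mul_nonneg (by positivity) hc00) hCm.le
  have hhalf : (m:ℝ) * c0 * Cm * J ≤ 1/2 := by
    nlinarith [mul_le_mul_of_nonneg_left h2J hDCm]
  calc (ν A).toReal ≤ ∫ x, A.indicator M x := hPle
    _ = (m:ℝ) * c0 * ((Real.exp (-(t*a)) * Cm) * ((Real.sqrt (1+d))^m * J)) := by
        rw [hWres, hK1form, hscale]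
    _ = (Real.exp (-(t*a)) * (Real.sqrt (1+d))^m) * ((m:ℝ) * c0 * Cm * J) := by ring
    _ ≤ (Real.exp (-(t*a)) * (Real.sqrt (1+d))^m) * (1/2) :=
        mul_le_mul_of_nonneg_left hhalf (by positivity)
    _ = 1/2 * Real.exp (-((m:ℝ)/2) * (d - Real.log (1+d))) := by
        rw [hRHSexp]; ring
end

section
/- Let P_0 = N(0, n^{-1} I_N) and let P_k be the uniform mixture of N(θ, n^{-1} I_N) over all θ ∈ C(a,k), where C(a,k) is the set of N-vectors whose first k coordinates are ±a and remaining coordinates are 0. Then the chi-squared affinity satisfies ∫ (dP_k)²/dP_0 ≤ exp(k a⁴ n²). -/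
open MeasureTheory Real

namespace ChiSqAux

noncomputable def g (n μ : ℝ) (x : ℝ) : ℝ :=
  Real.sqrt (n / (2 * π)) * Real.exp (-(n * (x - μ) ^ 2) / 2)

lemma g_eq (n : ℝ) (hn : 0 < n) (μ : ℝ) :
    g n μ = ProbabilityTheory.gaussianPDFReal μ ⟨n⁻¹, by positivity⟩ := by
  funext x
  simp only [g, ProbabilityTheory.gaussianPDFReal, NNReal.coe_mk]
  change √(n / (2 * π)) * _ = (√(2 * π * n⁻¹))⁻¹ * rexp (-(x - μ) ^ 2 / (2 * n⁻¹))
  congr 1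
  · rw [← Real.sqrt_inv]
    congr 1
    field_simp
  · congr 1
    field_simp

lemma g_pos (n : ℝ) (hn : 0 < n) (μ x : ℝ) : 0 < g n μ x := by
  have := Real.pi_pos
  unfold g
  positivity

lemma g_integrable (n : ℝ) (hn : 0 < n) (μ : ℝ) : Integrable (g n μ) := by
  rw [g_eq n hn μ]; exact ProbabilityTheory.integrable_gaussianPDFReal _ _

lemma g_integral (n : ℝ) (hn : 0 < n) (μ : ℝ) : ∫ x, g n μ x = 1 := by
  rw [g_eq n hn μ]
  refine ProbabilityTheory.integral_gaussianPDFReal_eq_one μ ?_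
  intro h
  have h' := congrArg (fun r : NNReal => (r : ℝ)) h
  change n⁻¹ = (0 : ℝ) at h'
  exact hn.ne' (inv_eq_zero.mp h')

lemma g_mul_div (n : ℝ) (hn : 0 < n) (θ θ' x : ℝ) :
    g n θ x * g n θ' x / g n 0 x = Real.exp (n * (θ * θ')) * g n (θ + θ') x := by
  have hc : 0 < Real.sqrt (n / (2 * π)) := Real.sqrt_pos.2 (by positivity)
  have h0 : g n 0 x ≠ 0 := (g_pos n hn 0 x).ne'
  unfold g at *
  rw [div_eq_iff h0]
  have key : rexp (-(n * (x - θ) ^ 2) / 2) * rexp (-(n * (x - θ') ^ 2) / 2)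
      = rexp (n * (θ * θ')) * (rexp (-(n * (x - (θ + θ')) ^ 2) / 2)
          * rexp (-(n * (x - 0) ^ 2) / 2)) := by
    rw [← Real.exp_add, ← Real.exp_add, ← Real.exp_add]
    congr 1
    ring
  calc Real.sqrt (n / (2 * π)) * rexp (-(n * (x - θ) ^ 2) / 2)
        * (Real.sqrt (n / (2 * π)) * rexp (-(n * (x - θ') ^ 2) / 2))
      = Real.sqrt (n / (2 * π)) * Real.sqrt (n / (2 * π))
        * (rexp (-(n * (x - θ) ^ 2) / 2) * rexp (-(n * (x - θ') ^ 2) / 2)) := by ring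
    _ = Real.sqrt (n / (2 * π)) * Real.sqrt (n / (2 * π))
        * (rexp (n * (θ * θ')) * (rexp (-(n * (x - (θ + θ')) ^ 2) / 2)
            * rexp (-(n * (x - 0) ^ 2) / 2))) := by rw [key]
    _ = _ := by ring

lemma prod_mul_div {N : ℕ} (n : ℝ) (hn : 0 < n) (θ θ' x : Fin N → ℝ) :
    (∏ i, g n (θ i) (x i)) * (∏ i, g n (θ' i) (x i)) / (∏ i, g n 0 (x i))
      = Real.exp (n * ∑ i, θ i * θ' i) * ∏ i, g n (θ i + θ' i) (x i) := by
  rw [← Finset.prod_mul_distrib, ← Finset.prod_div_distrib, Finset.mul_sum, Real.exp_sum,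
    ← Finset.prod_mul_distrib]
  exact Finset.prod_congr rfl fun i _ => g_mul_div n hn (θ i) (θ' i) (x i)

lemma integral_prod_g {N : ℕ} (n : ℝ) (hn : 0 < n) (θ : Fin N → ℝ) :
    ∫ x : Fin N → ℝ, ∏ i, g n (θ i) (x i) = 1 := by
  rw [MeasureTheory.volume_pi, MeasureTheory.integral_fintype_prod_eq_prod (fun i x => g n (θ i) x)]
  exact Finset.prod_eq_one fun i _ => g_integral n hn _

lemma sum_inner {N k : ℕ} (hkN : k ≤ N) (a : ℝ) (s s' : Fin k → Bool) :
    ∑ i : Fin N, ((if h : (i : ℕ) < k then (if s ⟨i, h⟩ then a else -a) else 0)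
        * (if h : (i : ℕ) < k then (if s' ⟨i, h⟩ then a else -a) else 0))
      = ∑ j : Fin k, (if s j = s' j then a ^ 2 else -(a ^ 2)) := by
  have h1 : ∑ i : Fin N, ((if h : (i : ℕ) < k then (if s ⟨i, h⟩ then a else -a) else 0)
        * (if h : (i : ℕ) < k then (if s' ⟨i, h⟩ then a else -a) else 0))
      = ∑ i ∈ Finset.univ.map (Fin.castLEEmb hkN),
          ((if h : (i : ℕ) < k then (if s ⟨i, h⟩ then a else -a) else 0)
            * (if h : (i : ℕ) < k then (if s' ⟨i, h⟩ then a else -a) else 0)) := by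
    refine (Finset.sum_subset (Finset.subset_univ _) fun i _ hi => ?_).symm
    have hik : ¬ ((i : ℕ) < k) := by
      intro h
      refine hi (Finset.mem_map.2 ⟨⟨(i : ℕ), h⟩, Finset.mem_univ _, ?_⟩)
      ext
      simp
    simp [hik]
  rw [h1, Finset.sum_map]
  refine Finset.sum_congr rfl fun j _ => ?_
  rcases j with ⟨jv, hjv⟩
  have hc : (Fin.castLEEmb hkN ⟨jv, hjv⟩ : Fin N) = ⟨jv, lt_of_lt_of_le hjv hkN⟩ := rfl
  rw [hc]
  simp only [dif_pos hjv]
  cases hs : s ⟨jv, hjv⟩ <;> cases hs' : s' ⟨jv, hjv⟩ <;> simp [hs, hs'] <;> ring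

lemma sum_sum (k : ℕ) (t : ℝ) :
    ∑ s : Fin k → Bool, ∑ s' : Fin k → Bool,
        ∏ j : Fin k, (if s j = s' j then rexp t else rexp (-t))
      = (2 * (rexp t + rexp (-t))) ^ k := by
  rw [← Fintype.sum_prod_type']
  rw [← Equiv.sum_comp (Equiv.arrowProdEquivProdArrow (Fin k) (fun _ => Bool) (fun _ => Bool))
        (fun p : (Fin k → Bool) × (Fin k → Bool) =>
          ∏ j, (if p.1 j = p.2 j then rexp t else rexp (-t)))]
  simp only [Equiv.arrowProdEquivProdArrow, Equiv.coe_fn_mk]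
  change ∑ i : Fin k → Bool × Bool, ∏ j, (if (i j).1 = (i j).2 then rexp t else rexp (-t)) = _
  rw [← Fintype.prod_sum (fun (_ : Fin k) (b : Bool × Bool) =>
        if b.1 = b.2 then rexp t else rexp (-t))]
  rw [Finset.prod_const, Finset.card_univ, Fintype.card_fin]
  congr 1
  rw [Fintype.sum_prod_type]
  simp [Fintype.sum_bool]
  ring

end ChiSqAux

/-- Chi-squared affinity bound: with `p₀` the density of `N(0, n⁻¹ I_N)` and `p_k` the
density of the uniform mixture of `N(θ, n⁻¹ I_N)` over the `2^k` vertices `θ ∈ C(a,k)`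
(first `k` coordinates `±a`, the rest `0`), one has `∫ p_k² / p₀ ≤ exp(k a⁴ n²)`. -/
theorem chi_squared_affinity_bound (N k : ℕ) (hk1 : 1 ≤ k) (hkN : k ≤ N)
    (a : ℝ) (ha : 0 < a) (n : ℝ) (hn : 0 < n) :
    let φ : (Fin N → ℝ) → (Fin N → ℝ) → ℝ := fun θ x =>
      ∏ i, (Real.sqrt (n / (2 * π)) * Real.exp (-(n * (x i - θ i) ^ 2) / 2))
    let vertex : (Fin k → Bool) → Fin N → ℝ := fun s i =>
      if h : (i : ℕ) < k then (if s ⟨i, h⟩ then a else -a) else 0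
    let p0 : (Fin N → ℝ) → ℝ := φ 0
    let pk : (Fin N → ℝ) → ℝ := fun x => (2 : ℝ)⁻¹ ^ k * ∑ s : Fin k → Bool, φ (vertex s) x
    ∫ x, (pk x) ^ 2 / p0 x ≤ Real.exp (k * a ^ 4 * n ^ 2) := by
  intro φ vertex p0 pk
  have hφ : ∀ θ x, φ θ x = ∏ i, ChiSqAux.g n (θ i) (x i) := fun _ _ => rfl
  have hp0 : ∀ x, p0 x = ∏ i, ChiSqAux.g n 0 (x i) := fun _ => rfl
  have hv : ∀ s s' : Fin k → Bool, ∑ i : Fin N, vertex s i * vertex s' i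
      = ∑ j : Fin k, (if s j = s' j then a ^ 2 else -(a ^ 2)) :=
    fun s s' => ChiSqAux.sum_inner hkN a s s'
  have key : ∀ x : Fin N → ℝ, pk x ^ 2 / p0 x
      = (2 : ℝ)⁻¹ ^ k * ((2 : ℝ)⁻¹ ^ k * ∑ s : Fin k → Bool, ∑ s' : Fin k → Bool,
          (Real.exp (n * ∑ i, vertex s i * vertex s' i)
            * ∏ i, ChiSqAux.g n (vertex s i + vertex s' i) (x i))) := by
    intro x
    have hpk : pk x = (2 : ℝ)⁻¹ ^ k * ∑ s : Fin k → Bool, φ (vertex s) x := rfl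
    have h2 : pk x ^ 2 = (2 : ℝ)⁻¹ ^ k * ((2 : ℝ)⁻¹ ^ k
        * ∑ s : Fin k → Bool, ∑ s' : Fin k → Bool, φ (vertex s) x * φ (vertex s') x) := by
      rw [hpk, mul_pow, sq (∑ s : Fin k → Bool, φ (vertex s) x), Finset.sum_mul_sum]
      ring
    rw [h2, mul_div_assoc, mul_div_assoc, Finset.sum_div]
    congr 1
    congr 1
    refine Finset.sum_congr rfl fun s _ => ?_
    rw [Finset.sum_div]
    refine Finset.sum_congr rfl fun s' _ => ?_
    rw [hφ, hφ, hp0]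
    exact ChiSqAux.prod_mul_div n hn _ _ x
  have hInt : ∀ s s' : Fin k → Bool, Integrable (fun x : Fin N → ℝ =>
      Real.exp (n * ∑ i, vertex s i * vertex s' i)
        * ∏ i, ChiSqAux.g n (vertex s i + vertex s' i) (x i)) := fun s s' =>
    (Integrable.fintype_prod (fun i => ChiSqAux.g_integrable n hn _)).const_mul _
  have hexp : ∀ s s' : Fin k → Bool,
      Real.exp (n * ∑ j : Fin k, (if s j = s' j then a ^ 2 else -(a ^ 2)))
        = ∏ j : Fin k, (if s j = s' j then rexp (n * a ^ 2) else rexp (-(n * a ^ 2))) := by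
    intro s s'
    rw [Finset.mul_sum, Real.exp_sum]
    refine Finset.prod_congr rfl fun j _ => ?_
    split_ifs
    · rfl
    · rw [mul_neg]
  calc ∫ x, pk x ^ 2 / p0 x
      = (2 : ℝ)⁻¹ ^ k * ((2 : ℝ)⁻¹ ^ k * ∑ s : Fin k → Bool, ∑ s' : Fin k → Bool,
          Real.exp (n * ∑ i, vertex s i * vertex s' i)) := by
        simp_rw [key]
        rw [MeasureTheory.integral_const_mul, MeasureTheory.integral_const_mul,
          MeasureTheory.integral_finset_sum _
            (fun s _ => integrable_finset_sum _ fun s' _ => hInt s s')]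
        congr 1
        congr 1
        refine Finset.sum_congr rfl fun s _ => ?_
        rw [MeasureTheory.integral_finset_sum _ (fun s' _ => hInt s s')]
        refine Finset.sum_congr rfl fun s' _ => ?_
        rw [MeasureTheory.integral_const_mul, ChiSqAux.integral_prod_g n hn, mul_one]
    _ = (2 : ℝ)⁻¹ ^ k * ((2 : ℝ)⁻¹ ^ k
          * (2 * (rexp (n * a ^ 2) + rexp (-(n * a ^ 2)))) ^ k) := by
        congr 1
        congr 1
        rw [← ChiSqAux.sum_sum k (n * a ^ 2)]
        refine Finset.sum_congr rfl fun s _ => Finset.sum_congr rfl fun s' _ => ?_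
        rw [hv s s', hexp s s']
    _ = Real.cosh (n * a ^ 2) ^ k := by
        rw [Real.cosh_eq, ← mul_pow, ← mul_pow]
        congr 1
        ring
    _ ≤ rexp ((n * a ^ 2) ^ 2 / 2) ^ k :=
        pow_le_pow_left₀ (Real.cosh_pos _).le (Real.cosh_le_exp_half_sq _) k
    _ = rexp ((k : ℝ) * ((n * a ^ 2) ^ 2 / 2)) := by
        rw [← Real.exp_nat_mul]
    _ ≤ Real.exp (k * a ^ 4 * n ^ 2) := by
        apply Real.exp_le_exp.2
        have h0 : (0 : ℝ) ≤ (k : ℝ) * a ^ 4 * n ^ 2 := by positivity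
        nlinarith
end

section
/- Let P_0 = N(0, n^{-1} I_N) and let P_k be the uniform mixture of N(θ, n^{-1} I_N) over all θ ∈ C(a,k) as above. Fix 0 < ε < 1 and suppose k a⁴ n² ≤ log(1 + ε²). Then the L₁ distance satisfies L₁(P_0, P_k) = ∫ |dP_0 − dP_k| ≤ ε. -/
open MeasureTheory Real

noncomputable def gauss1 (n t : ℝ) : ℝ := Real.sqrt (n / (2 * π)) * Real.exp (-(n * t ^ 2) / 2)

lemma gauss1_pos {n : ℝ} (hn : 0 < n) (t : ℝ) : 0 < gauss1 n t :=
  mul_pos (Real.sqrt_pos.2 (by positivity)) (Real.exp_pos _)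

lemma gauss1_cont (n : ℝ) : Continuous (gauss1 n) := by
  unfold gauss1; fun_prop

lemma integrable_gauss1 {n : ℝ} (hn : 0 < n) : Integrable (gauss1 n) := by
  have h : Integrable (fun t : ℝ => Real.exp (-(n/2) * t ^ 2)) :=
    integrable_exp_neg_mul_sq (by positivity)
  have := h.const_mul (Real.sqrt (n / (2 * π)))
  refine this.congr ?_
  filter_upwards with t
  unfold gauss1
  ring_nf

lemma integral_gauss1 {n : ℝ} (hn : 0 < n) : ∫ t, gauss1 n t = 1 := by
  unfold gauss1
  rw [MeasureTheory.integral_const_mul]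
  have h : (fun t : ℝ => Real.exp (-(n * t ^ 2) / 2)) = fun t => Real.exp (-(n/2) * t ^ 2) := by
    funext t; ring_nf
  rw [h, integral_gaussian]
  rw [← Real.sqrt_mul (by positivity)]
  rw [show n / (2 * π) * (π / (n / 2)) = 1 by field_simp]
  exact Real.sqrt_one

lemma integrable_gauss1_shift {n : ℝ} (hn : 0 < n) (u : ℝ) :
    Integrable (fun t => gauss1 n (t - u)) :=
  (integrable_gauss1 hn).comp_sub_right u

lemma integral_gauss1_shift {n : ℝ} (hn : 0 < n) (u : ℝ) :
    ∫ t, gauss1 n (t - u) = 1 := by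
  rw [integral_sub_right_eq_self (gauss1 n) u]; exact integral_gauss1 hn

lemma gauss1_mul_div {n : ℝ} (hn : 0 < n) (x u v : ℝ) :
    gauss1 n (x - u) * gauss1 n (x - v) / gauss1 n x
      = Real.exp (n * u * v) * gauss1 n (x - (u + v)) := by
  have hc : (0:ℝ) < Real.sqrt (n / (2 * π)) := Real.sqrt_pos.2 (by positivity)
  unfold gauss1
  rw [div_eq_iff (ne_of_gt (mul_pos hc (Real.exp_pos _)))]
  rw [show Real.exp (n*u*v) * (Real.sqrt (n/(2*π)) * Real.exp (-(n*(x-(u+v))^2)/2)) *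
      (Real.sqrt (n/(2*π)) * Real.exp (-(n*x^2)/2))
      = Real.sqrt (n/(2*π)) * Real.sqrt (n/(2*π)) *
        (Real.exp (n*u*v) * (Real.exp (-(n*(x-(u+v))^2)/2) * Real.exp (-(n*x^2)/2))) by ring]
  rw [← Real.exp_add, ← Real.exp_add]
  rw [show Real.sqrt (n/(2*π)) * Real.exp (-(n*(x-u)^2)/2) *
      (Real.sqrt (n/(2*π)) * Real.exp (-(n*(x-v)^2)/2))
      = Real.sqrt (n/(2*π)) * Real.sqrt (n/(2*π)) *
        Real.exp (-(n*(x-u)^2)/2 + -(n*(x-v)^2)/2) by rw [Real.exp_add]; ring]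
  congr 1
  ring

noncomputable def gaussN (N : ℕ) (n : ℝ) (θ : Fin N → ℝ) : (Fin N → ℝ) → ℝ :=
  fun x => ∏ i, gauss1 n (x i - θ i)

lemma gaussN_pos {N : ℕ} {n : ℝ} (hn : 0 < n) (θ : Fin N → ℝ) (x : Fin N → ℝ) :
    0 < gaussN N n θ x :=
  Finset.prod_pos fun _ _ => gauss1_pos hn _

lemma gaussN_cont {N : ℕ} {n : ℝ} (θ : Fin N → ℝ) : Continuous (gaussN N n θ) := by
  unfold gaussN
  exact continuous_finset_prod _ fun i _ =>
    (gauss1_cont n).comp ((continuous_apply i).sub continuous_const)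

lemma integrable_gaussN {N : ℕ} {n : ℝ} (hn : 0 < n) (θ : Fin N → ℝ) :
    Integrable (gaussN N n θ) :=
  Integrable.fintype_prod (f := fun i t => gauss1 n (t - θ i))
    (fun i => integrable_gauss1_shift hn (θ i))

lemma integral_gaussN {N : ℕ} {n : ℝ} (hn : 0 < n) (θ : Fin N → ℝ) :
    ∫ x, gaussN N n θ x = 1 := by
  unfold gaussN
  rw [integral_fintype_prod_volume_eq_prod (f := fun i t => gauss1 n (t - θ i))]
  simp [integral_gauss1_shift hn]

lemma gaussN_mul_div {N : ℕ} {n : ℝ} (hn : 0 < n) (θ θ' : Fin N → ℝ) (x : Fin N → ℝ) :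
    gaussN N n θ x * gaussN N n θ' x / gaussN N n 0 x
      = Real.exp (n * ∑ i, θ i * θ' i) * gaussN N n (θ + θ') x := by
  unfold gaussN
  rw [← Finset.prod_mul_distrib, ← Finset.prod_div_distrib]
  have : ∀ i : Fin N, gauss1 n (x i - θ i) * gauss1 n (x i - θ' i)
        / gauss1 n (x i - (0:Fin N → ℝ) i)
      = Real.exp (n * (θ i * θ' i)) * gauss1 n (x i - (θ + θ') i)  := by
    intro i
    simp only [Pi.zero_apply, sub_zero, Pi.add_apply]
    rw [gauss1_mul_div hn, mul_assoc]
  simp_rw [this]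
  rw [Finset.prod_mul_distrib, ← Real.exp_sum, Finset.mul_sum]

lemma sum_dite_lt {k N : ℕ} (hkN : k ≤ N) (G : Fin k → ℝ) :
    ∑ i : Fin N, (if h : (i : ℕ) < k then G ⟨i, h⟩ else 0) = ∑ j : Fin k, G j := by
  set f : ℕ → ℝ := fun m => if h : m < k then G ⟨m, h⟩ else 0 with hf
  have h1 : ∑ i : Fin N, (if h : (i : ℕ) < k then G ⟨i, h⟩ else 0) = ∑ m ∈ Finset.range N, f m :=
    Fin.sum_univ_eq_sum_range f N
  have h2 : ∑ j : Fin k, G j = ∑ m ∈ Finset.range k, f m := by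
    rw [← Fin.sum_univ_eq_sum_range f k]
    exact Finset.sum_congr rfl fun j _ => by simp [hf, j.isLt]
  rw [h1, h2, ← Finset.sum_range_add_sum_Ico f hkN, add_eq_left]
  refine Finset.sum_eq_zero fun m hm => ?_
  rw [Finset.mem_Ico] at hm
  simp [hf, Nat.not_lt.2 hm.1]

/-- L₁ bound between `N(0, n⁻¹ I_N)` and the uniform mixture of `N(θ, n⁻¹ I_N)` over the
vertices `θ ∈ C(a,k)`: if `k a⁴ n² ≤ log(1 + ε²)` with `0 < ε < 1`, then
`∫ |p₀ - p_k| ≤ ε`. -/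
theorem L1_mixture_bound (N k : ℕ) (hk1 : 1 ≤ k) (hkN : k ≤ N)
    (a : ℝ) (ha : 0 < a) (n : ℝ) (hn : 0 < n)
    (ε : ℝ) (hε0 : 0 < ε) (hε1 : ε < 1)
    (hsep : k * a ^ 4 * n ^ 2 ≤ Real.log (1 + ε ^ 2)) :
    let φ : (Fin N → ℝ) → (Fin N → ℝ) → ℝ := fun θ x =>
      ∏ i, (Real.sqrt (n / (2 * π)) * Real.exp (-(n * (x i - θ i) ^ 2) / 2))
    let vertex : (Fin k → Bool) → Fin N → ℝ := fun s i =>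
      if h : (i : ℕ) < k then (if s ⟨i, h⟩ then a else -a) else 0
    let p0 : (Fin N → ℝ) → ℝ := φ 0
    let pk : (Fin N → ℝ) → ℝ := fun x => (2 : ℝ)⁻¹ ^ k * ∑ s : Fin k → Bool, φ (vertex s) x
    ∫ x, |p0 x - pk x| ≤ ε := by
  intro φ vertex p0 pk
  have hφ : φ = fun θ => gaussN N n θ := rfl
  have hp0 : p0 = gaussN N n 0 := rfl
  have hpk : pk = fun x => (2:ℝ)⁻¹ ^ k * ∑ s : Fin k → Bool, gaussN N n (vertex s) x := rfl
  have hv : ∀ (s : Fin k → Bool) (i : Fin N),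
      vertex s i = if h : (i : ℕ) < k then (if s ⟨i, h⟩ then a else -a) else 0 := fun _ _ => rfl
  clear_value φ vertex p0 pk
  subst hφ hp0
  -- inner products of vertices
  have hip : ∀ s s' : Fin k → Bool, ∑ i, vertex s i * vertex s' i
      = a ^ 2 * ∑ j : Fin k, (if s j = s' j then (1:ℝ) else -1) := by
    intro s s'
    rw [Finset.mul_sum,
      ← sum_dite_lt hkN (fun j => a ^ 2 * (if s j = s' j then (1:ℝ) else -1))]
    refine Finset.sum_congr rfl fun i _ => ?_
    rw [hv, hv]
    by_cases h : (i : ℕ) < k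
    · simp only [dif_pos h]
      cases hb : s ⟨i, h⟩ <;> cases hb' : s' ⟨i, h⟩ <;> simp [hb, hb'] <;> ring
    · simp [dif_neg h]
  -- integral of each cross term
  have key : ∀ s s' : Fin k → Bool,
      ∫ x, gaussN N n (vertex s) x * gaussN N n (vertex s') x / gaussN N n 0 x
        = Real.exp (n * ∑ i, vertex s i * vertex s' i) := by
    intro s s'
    simp_rw [gaussN_mul_div hn]
    rw [MeasureTheory.integral_const_mul, integral_gaussN hn, mul_one]
  -- chi-square term Q
  set Q : (Fin N → ℝ) → ℝ :=
    fun x => ((2:ℝ)⁻¹ ^ k) ^ 2 * ∑ s : Fin k → Bool, ∑ s' : Fin k → Bool,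
      (gaussN N n (vertex s) x * gaussN N n (vertex s') x / gaussN N n 0 x) with hQ
  have hp0pos : ∀ x, 0 < gaussN N n 0 x := gaussN_pos hn 0
  have hQeq : ∀ x, pk x ^ 2 / gaussN N n 0 x = Q x := by
    intro x
    rw [hQ]
    simp only [hpk]
    rw [mul_pow, show (∑ s : Fin k → Bool, gaussN N n (vertex s) x) ^ 2
      = ∑ s : Fin k → Bool, ∑ s' : Fin k → Bool,
        gaussN N n (vertex s) x * gaussN N n (vertex s') x by rw [sq, Finset.sum_mul_sum],
      mul_div_assoc, Finset.sum_div]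
    simp_rw [Finset.sum_div]
  have hint_cross : ∀ s s' : Fin k → Bool,
      Integrable (fun x => gaussN N n (vertex s) x * gaussN N n (vertex s') x
        / gaussN N n 0 x) := by
    intro s s'
    have : (fun x => gaussN N n (vertex s) x * gaussN N n (vertex s') x / gaussN N n 0 x)
        = fun x => Real.exp (n * ∑ i, vertex s i * vertex s' i)
            * gaussN N n (vertex s + vertex s') x := by
      funext x; exact gaussN_mul_div hn _ _ x
    rw [this]
    exact (integrable_gaussN hn _).const_mul _
  have hQint : Integrable Q := by
    rw [hQ]
    exact (integrable_finset_sum _ fun s _ =>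
      integrable_finset_sum _ fun s' _ => hint_cross s s').const_mul _
  -- value of ∫ Q
  set t : ℝ := n * a ^ 2 with ht
  have htpos : 0 < t := by positivity
  have hsum : ∑ s : Fin k → Bool, ∑ s' : Fin k → Bool,
      Real.exp (n * ∑ i, vertex s i * vertex s' i)
      = (2 * Real.exp t + 2 * Real.exp (-t)) ^ k := by
    have hterm : ∀ s s' : Fin k → Bool, Real.exp (n * ∑ i, vertex s i * vertex s' i)
        = ∏ j : Fin k, Real.exp (if s j = s' j then t else -t) := by
      intro s s'
      rw [hip s s', ← Real.exp_sum]
      congr 1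
      rw [Finset.mul_sum, Finset.mul_sum]
      refine Finset.sum_congr rfl fun j _ => ?_
      by_cases h : s j = s' j <;> simp [h, ht] <;> ring
    simp_rw [hterm]
    rw [← Fintype.sum_prod_type']
    rw [← Equiv.sum_comp (Equiv.arrowProdEquivProdArrow (Fin k) (fun _ => Bool) (fun _ => Bool))
      (fun p : (Fin k → Bool) × (Fin k → Bool) =>
        ∏ j : Fin k, Real.exp (if p.1 j = p.2 j then t else -t))]
    have : ∀ q : Fin k → Bool × Bool,
        (∏ j : Fin k, Real.exp (if ((Equiv.arrowProdEquivProdArrow (Fin k) (fun _ => Bool) (fun _ => Bool)) q).1 j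
            = ((Equiv.arrowProdEquivProdArrow (Fin k) (fun _ => Bool) (fun _ => Bool)) q).2 j then t else -t))
          = ∏ j : Fin k, Real.exp (if (q j).1 = (q j).2 then t else -t) := by
      intro q; simp [Equiv.arrowProdEquivProdArrow]; congr
    simp_rw [this]
    rw [← Fintype.sum_pow (fun c : Bool × Bool => Real.exp (if c.1 = c.2 then t else -t)) k]
    congr 1
    rw [Fintype.sum_prod_type]
    simp [Fintype.sum_bool]
    ring
  have hQval : ∫ x, Q x = Real.cosh t ^ k := by
    rw [hQ]
    rw [MeasureTheory.integral_const_mul, integral_finset_sum _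
      (fun s _ => integrable_finset_sum _ fun s' _ => hint_cross s s')]
    simp_rw [integral_finset_sum _ (fun s' _ => hint_cross _ s')]
    simp_rw [key]
    rw [hsum]
    rw [show ((2:ℝ)⁻¹ ^ k) ^ 2 = ((2:ℝ)⁻¹ ^ 2) ^ k by rw [← pow_mul, ← pow_mul, mul_comm]]
    rw [← mul_pow]
    congr 1
    rw [Real.cosh_eq]
    ring
  -- bound on ∫ Q
  have hQbound : ∫ x, Q x ≤ 1 + ε ^ 2 := by
    rw [hQval]
    have h1 : Real.cosh t ^ k ≤ Real.exp (t ^ 2 / 2) ^ k :=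
      pow_le_pow_left₀ (Real.cosh_pos t).le (Real.cosh_le_exp_half_sq t) k
    have h2 : Real.exp (t ^ 2 / 2) ^ k = Real.exp (k * (t ^ 2 / 2)) := by
      rw [← Real.exp_nat_mul]
    have h3 : (k : ℝ) * (t ^ 2 / 2) ≤ Real.log (1 + ε ^ 2) := by
      refine le_trans ?_ hsep
      rw [ht]
      nlinarith [sq_nonneg (n * a ^ 2), (by exact_mod_cast hk1 : (1:ℝ) ≤ (k:ℝ))]
    calc Real.cosh t ^ k ≤ Real.exp ((k : ℝ) * (t ^ 2 / 2)) := by rw [← h2]; exact h1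
      _ ≤ Real.exp (Real.log (1 + ε ^ 2)) := Real.exp_le_exp.2 h3
      _ = 1 + ε ^ 2 := Real.exp_log (by positivity)
  -- basic integrability
  have hint_p0 : Integrable (gaussN N n 0) := integrable_gaussN hn 0
  have hint_pk : Integrable pk := by
    simp only [hpk]
    exact (integrable_finset_sum _ fun s _ => integrable_gaussN hn (vertex s)).const_mul _
  have hpk_int : ∫ x, pk x = 1 := by
    simp only [hpk]
    rw [MeasureTheory.integral_const_mul,
      integral_finset_sum _ fun s _ => integrable_gaussN hn (vertex s)]
    simp_rw [integral_gaussN hn]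
    rw [Finset.sum_const, Finset.card_univ]
    simp only [nsmul_eq_mul, mul_one]
    rw [Fintype.card_fun]
    simp only [Fintype.card_bool, Fintype.card_fin]
    push_cast
    rw [← mul_pow]
    norm_num
  -- the function D = (p0 - pk)^2 / p0
  set D : (Fin N → ℝ) → ℝ := fun x => (gaussN N n 0 x - pk x) ^ 2 / gaussN N n 0 x with hDdef
  have hD : D = fun x => gaussN N n 0 x - 2 * pk x + Q x := by
    funext x
    rw [hDdef, ← hQeq x]
    have h0 := (hp0pos x).ne'
    field_simp
    ring
  have hDint : Integrable D := by
    rw [hD]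
    exact ((hint_p0.sub (hint_pk.const_mul 2)).add hQint)
  have hDval : ∫ x, D x ≤ ε ^ 2 := by
    rw [hD]
    have hi1 : Integrable (fun x => gaussN N n 0 x - 2 * pk x) := by
      exact hint_p0.sub (hint_pk.const_mul 2)
    rw [integral_add hi1 hQint,
      integral_sub hint_p0 (hint_pk.const_mul 2), MeasureTheory.integral_const_mul,
      integral_gaussN hn, hpk_int]
    linarith [hQbound]
  have hDnonneg : ∀ x, 0 ≤ D x := fun x => div_nonneg (sq_nonneg _) (hp0pos x).le
  -- Cauchy-Schwarz setup
  set f : (Fin N → ℝ) → ℝ := fun x => |gaussN N n 0 x - pk x| / Real.sqrt (gaussN N n 0 x)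
    with hfdef
  set g : (Fin N → ℝ) → ℝ := fun x => Real.sqrt (gaussN N n 0 x) with hgdef
  have hsqrt_ne : ∀ x, Real.sqrt (gaussN N n 0 x) ≠ 0 :=
    fun x => (Real.sqrt_pos.2 (hp0pos x)).ne'
  have hfg : ∀ x, f x * g x = |gaussN N n 0 x - pk x| := by
    intro x; rw [hfdef, hgdef]; exact div_mul_cancel₀ _ (hsqrt_ne x)
  have hf2 : ∀ x, f x ^ 2 = D x := by
    intro x
    rw [hfdef, hDdef]
    simp only
    rw [div_pow, sq_abs, Real.sq_sqrt (hp0pos x).le]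
  have hg2 : ∀ x, g x ^ 2 = gaussN N n 0 x := fun x => Real.sq_sqrt (hp0pos x).le
  -- continuity / measurability
  have hpk_cont : Continuous pk := by
    simp only [hpk]
    rw [show (fun x => (2:ℝ)⁻¹ ^ k * ∑ s : Fin k → Bool, gaussN N n (vertex s) x)
      = fun x => (2:ℝ)⁻¹ ^ k * ((fun x => ∑ s : Fin k → Bool, gaussN N n (vertex s) x) x) from rfl]
    exact continuous_const.mul (continuous_finset_sum _ fun s _ => gaussN_cont (vertex s))
  have hf_cont : Continuous f := by
    rw [hfdef]
    exact Continuous.div ((gaussN_cont 0).sub hpk_cont).abs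
      (Real.continuous_sqrt.comp (gaussN_cont 0)) hsqrt_ne
  have hg_cont : Continuous g := Real.continuous_sqrt.comp (gaussN_cont 0)
  have hf_mem : MemLp f (ENNReal.ofReal 2) := by
    rw [show ENNReal.ofReal 2 = 2 by norm_num]
    refine (memLp_two_iff_integrable_sq hf_cont.aestronglyMeasurable).2 ?_
    exact ((funext hf2 : (fun x => f x ^ 2) = D) ▸ hDint)
  have hg_mem : MemLp g (ENNReal.ofReal 2) := by
    rw [show ENNReal.ofReal 2 = 2 by norm_num]
    refine (memLp_two_iff_integrable_sq hg_cont.aestronglyMeasurable).2 ?_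
    exact ((funext hg2 : (fun x => g x ^ 2) = gaussN N n 0) ▸ hint_p0)
  have hconj : (2:ℝ).HolderConjugate 2 := Real.holderConjugate_iff.mpr ⟨by norm_num, by norm_num⟩
  have hrpow : ∀ y : ℝ, y ^ (2:ℝ) = y ^ (2:ℕ) := by
    intro y; rw [← Real.rpow_natCast y 2]; norm_num
  -- apply Hölder
  have holder := MeasureTheory.integral_mul_le_Lp_mul_Lq_of_nonneg hconj
    (Filter.Eventually.of_forall fun x => by positivity)
    (Filter.Eventually.of_forall fun x => Real.sqrt_nonneg _) hf_mem hg_mem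
  rw [show (fun x => |gaussN N n 0 x - pk x|) = fun x => f x * g x from funext fun x =>
    (hfg x).symm] at *
  have hmain : ∫ x, f x * g x ≤ (∫ x, f x ^ (2:ℝ)) ^ ((1:ℝ)/2) * (∫ x, g x ^ (2:ℝ)) ^ ((1:ℝ)/2) :=
    holder
  have e1 : ∫ x, f x ^ (2:ℝ) = ∫ x, D x := by
    simp_rw [hrpow]; exact congrArg _ (funext hf2)
  have e2 : ∫ x, g x ^ (2:ℝ) = 1 := by
    simp_rw [hrpow]
    rw [show (fun x => g x ^ (2:ℕ)) = gaussN N n 0 from funext hg2]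
    exact integral_gaussN hn 0
  rw [e1, e2, Real.one_rpow, mul_one] at hmain
  have hDnn : 0 ≤ ∫ x, D x := integral_nonneg hDnonneg
  calc ∫ x, f x * g x ≤ (∫ x, D x) ^ ((1:ℝ)/2) := hmain
    _ ≤ (ε ^ 2) ^ ((1:ℝ)/2) := Real.rpow_le_rpow hDnn hDval (by norm_num)
    _ = ε := by
        rw [← Real.rpow_natCast ε 2, ← Real.rpow_mul hε0.le]
        norm_num
end

section
/- Fix a > 0, τ > 0, p ≥ 2, L ≥ 1, n ≥ 1. Partition each level j into blocks B_i^j of L consecutive indices and set ξ_{j,i}² = Σ_{(j,k)∈B_i^j} θ_{j,k}². For θ ∈ B^τ_{p,q}(M), let 𝓘 = {(j,i) : ξ_{j,i}² > a L n^{−1}}. Then Card(𝓘) ≤ 3(1 − 2^{−2τ})^{−1/(1+2τ)} a^{−1/(1+2τ)} L^{−1} M^{2/(1+2τ)} n^{1/(1+2τ)}. -/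
open Finset

private lemma geom_tail_le {r : ℝ} (h0 : 0 ≤ r) (h1 : r < 1) (N : ℕ) :
    ∑ i ∈ range N, r ^ i ≤ (1 - r)⁻¹ :=
  le_trans
    (Summable.sum_le_tsum (range N) (fun i _ => pow_nonneg h0 i) (summable_geometric_of_lt_one h0 h1))
    (le_of_eq (tsum_geometric_of_lt_one h0 h1))

private lemma block_sum_eq (f : ℕ → ℝ) (L : ℕ) : ∀ m : ℕ,
    ∑ i ∈ range m, ∑ k ∈ Finset.Ico (i * L) ((i + 1) * L), f k = ∑ k ∈ range (m * L), f k := by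
  intro m
  induction m with
  | zero => simp
  | succ m ih =>
    rw [sum_range_succ, ih, Finset.range_eq_Ico]
    have h := Finset.sum_Ico_consecutive f (Nat.zero_le (m * L))
      (Nat.mul_le_mul_right L (Nat.le_succ m))
    simpa using h

/-- Counting bound for the number of high-energy blocks on a Besov body: blocks of `L`
consecutive coefficients whose energy exceeds `a L / n` number at most
`3 (1 - 2^{-2τ})^{-1/(1+2τ)} a^{-1/(1+2τ)} L⁻¹ M^{2/(1+2τ)} n^{1/(1+2τ)}`. -/
theorem besov_block_count (J : ℕ) (θ : ℕ → ℕ → ℝ) (p q τ M a : ℝ) (L n : ℕ)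
    (hp : 2 ≤ p) (hq : 1 ≤ q) (hτ : 0 < τ) (hM : 0 < M) (ha : 0 < a)
    (hL : 1 ≤ L) (hn : 1 ≤ n)
    (hs : 0 < τ + 1 / 2 - 1 / p)
    (hθ : (∑ j ∈ range J,
        ((2 : ℝ) ^ ((j : ℝ) * (τ + 1 / 2 - 1 / p)) *
          (∑ k ∈ range (2 ^ j), |θ j k| ^ p) ^ (1 / p)) ^ q) ^ (1 / q) ≤ M) :
    let ξsq : ℕ → ℕ → ℝ := fun j i => ∑ k ∈ Finset.Ico (i * L) ((i + 1) * L), (θ j k) ^ 2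
    let I : Finset (Σ _ : ℕ, ℕ) :=
      ((range J).sigma fun j => range (2 ^ j / L)).filter fun x => a * L / n < ξsq x.1 x.2
    (I.card : ℝ) ≤ 3 * (1 - (2 : ℝ) ^ (-(2 * τ))) ^ (-(1 / (1 + 2 * τ))) *
        a ^ (-(1 / (1 + 2 * τ))) * (L : ℝ)⁻¹ *
        M ^ (2 / (1 + 2 * τ)) * (n : ℝ) ^ (1 / (1 + 2 * τ)) := by
  intro ξsq I
  have hp0 : (0:ℝ) < p := lt_of_lt_of_le two_pos hp
  have hq0 : (0:ℝ) < q := lt_of_lt_of_le one_pos hq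
  have hL0 : (0:ℝ) < (L:ℝ) := by exact_mod_cast hL
  have hn0 : (0:ℝ) < (n:ℝ) := by exact_mod_cast hn
  set r : ℝ := (2:ℝ) ^ (-(2 * τ)) with hr_def
  have hr0 : 0 < r := Real.rpow_pos_of_pos two_pos _
  have hr1 : r < 1 :=
    Real.rpow_lt_one_of_one_lt_of_neg one_lt_two (by linarith)
  set D : ℝ := 1 - r with hD_def
  have hD0 : 0 < D := by simp only [hD_def]; linarith
  set s : ℝ := τ + 1 / 2 - 1 / p with hs_def
  -- Level-wise energy bound
  have hlevel : ∀ j ∈ range J,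
      ∑ k ∈ range (2 ^ j), (θ j k) ^ 2 ≤ M ^ 2 * r ^ j := by
    intro j hj
    set T : ℕ → ℝ := fun i =>
      (2:ℝ) ^ ((i:ℝ) * s) * (∑ k ∈ range (2 ^ i), |θ i k| ^ p) ^ (1 / p) with hT_def
    have hT0 : ∀ i, 0 ≤ T i := fun i =>
      mul_nonneg (Real.rpow_nonneg (by norm_num) _)
        (Real.rpow_nonneg (sum_nonneg fun k _ => Real.rpow_nonneg (abs_nonneg _) p) _)
    have hS0 : 0 ≤ ∑ i ∈ range J, T i ^ q :=
      sum_nonneg fun i _ => Real.rpow_nonneg (hT0 i) q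
    have hSq : ∑ i ∈ range J, T i ^ q ≤ M ^ q := by
      have h := Real.rpow_le_rpow (Real.rpow_nonneg hS0 _) hθ hq0.le
      rwa [← Real.rpow_mul hS0, one_div, inv_mul_cancel₀ hq0.ne', Real.rpow_one] at h
    have hTj : T j ≤ M := by
      by_contra hc
      push_neg at hc
      have h1 : T j ^ q ≤ M ^ q :=
        le_trans (Finset.single_le_sum (fun i _ => Real.rpow_nonneg (hT0 i) q) hj) hSq
      exact absurd h1 (not_le.mpr (Real.rpow_lt_rpow hM.le hc hq0))
    have hSp0 : 0 ≤ ∑ k ∈ range (2 ^ j), |θ j k| ^ p :=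
      sum_nonneg fun k _ => Real.rpow_nonneg (abs_nonneg _) p
    have h2js : (0:ℝ) < (2:ℝ) ^ ((j:ℝ) * s) := Real.rpow_pos_of_pos two_pos _
    have hPle : (∑ k ∈ range (2 ^ j), |θ j k| ^ p) ^ (1 / p)
        ≤ M * ((2:ℝ) ^ ((j:ℝ) * s))⁻¹ := by
      rw [mul_comm, ← div_eq_inv_mul]
      exact (le_div_iff₀' h2js).mpr hTj
    -- Hölder
    have holder := Real.inner_le_weight_mul_Lp_of_nonneg (range (2 ^ j))
      (p := p / 2) (by linarith) (fun _ => (1:ℝ)) (fun k => (θ j k) ^ 2)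
      (fun _ => zero_le_one) (fun k => sq_nonneg _)
    simp only [one_mul] at holder
    have habs : ∀ k, ((θ j k) ^ 2) ^ (p / 2) = |θ j k| ^ p := by
      intro k
      have h2 : ((2:ℕ):ℝ) * (p / 2) = p := by push_cast; ring
      rw [← sq_abs, ← Real.rpow_natCast |θ j k| 2, ← Real.rpow_mul (abs_nonneg _), h2]
    simp only [habs] at holder
    have hcard : ((range (2 ^ j)).card : ℝ) = (2:ℝ) ^ (j:ℕ) := by
      simp
    rw [Finset.sum_const, nsmul_eq_mul, mul_one] at holder
    have hfac2 : (∑ k ∈ range (2 ^ j), |θ j k| ^ p) ^ (p / 2)⁻¹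
        ≤ (M * ((2:ℝ) ^ ((j:ℝ) * s))⁻¹) ^ (2:ℝ) := by
      have heq : (p / 2)⁻¹ = 1 / p * 2 := by field_simp
      rw [heq, Real.rpow_mul hSp0]
      exact Real.rpow_le_rpow (Real.rpow_nonneg hSp0 _) hPle (by norm_num)
    have hfac1 : ((range (2 ^ j)).card : ℝ) ^ (1 - (p / 2)⁻¹)
        = (2:ℝ) ^ ((j:ℝ) * (1 - 2 / p)) := by
      rw [hcard, ← Real.rpow_natCast (2:ℝ) j, ← Real.rpow_mul (by norm_num : (0:ℝ) ≤ 2)]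
      congr 1
      field_simp
    have hRHS : (2:ℝ) ^ ((j:ℝ) * (1 - 2 / p)) * (M * ((2:ℝ) ^ ((j:ℝ) * s))⁻¹) ^ (2:ℝ)
        = M ^ 2 * r ^ j := by
      rw [Real.mul_rpow hM.le (inv_nonneg.mpr h2js.le), ← Real.rpow_neg_one ((2:ℝ) ^ ((j:ℝ)*s)),
        ← Real.rpow_mul (by norm_num : (0:ℝ) ≤ 2), ← Real.rpow_mul (by norm_num : (0:ℝ) ≤ 2),
        Real.rpow_two, hr_def, ← Real.rpow_natCast ((2:ℝ) ^ (-(2*τ))) j,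
        ← Real.rpow_mul (by norm_num : (0:ℝ) ≤ 2)]
      rw [mul_comm ((2:ℝ) ^ ((j:ℝ) * (1 - 2/p))), mul_assoc,
        ← Real.rpow_add two_pos]
      congr 2
      simp only [hs_def]
      field_simp
      ring
    calc ∑ k ∈ range (2 ^ j), (θ j k) ^ 2
        ≤ ((range (2 ^ j)).card : ℝ) ^ (1 - (p / 2)⁻¹) *
            (∑ k ∈ range (2 ^ j), |θ j k| ^ p) ^ (p / 2)⁻¹ := holder
      _ ≤ (2:ℝ) ^ ((j:ℝ) * (1 - 2 / p)) * (M * ((2:ℝ) ^ ((j:ℝ) * s))⁻¹) ^ (2:ℝ) := by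
          rw [hfac1]
          exact mul_le_mul_of_nonneg_left hfac2 (Real.rpow_nonneg (by norm_num) _)
      _ = M ^ 2 * r ^ j := hRHS
  -- threshold
  have ht0 : 0 < a * (L:ℝ) / n := div_pos (mul_pos ha hL0) hn0
  set c : ℕ → ℕ := fun j =>
    ((range (2 ^ j / L)).filter fun i => a * (L:ℝ) / n < ξsq j i).card with hc_def
  have hIcard : (I.card : ℝ) = ∑ j ∈ range J, (c j : ℝ) := by
    have hI : I = (range J).sigma
        (fun j => (range (2 ^ j / L)).filter fun i => a * (L:ℝ) / n < ξsq j i) := by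
      ext ⟨j, i⟩
      simp only [I, Finset.mem_filter, Finset.mem_sigma]
      tauto
    rw [hI, Finset.card_sigma]
    push_cast
    rfl
  have hcount : ∀ j ∈ range J, (c j : ℝ) ≤ M ^ 2 * r ^ j / (a * (L:ℝ) / n) := by
    intro j hj
    have h1 : (c j : ℝ) * (a * (L:ℝ) / n) ≤
        ∑ i ∈ (range (2 ^ j / L)).filter (fun i => a * (L:ℝ) / n < ξsq j i), ξsq j i := by
      have := Finset.card_nsmul_le_sum
        ((range (2 ^ j / L)).filter fun i => a * (L:ℝ) / n < ξsq j i)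
        (ξsq j) (a * (L:ℝ) / n) (fun i hi => (Finset.mem_filter.mp hi).2.le)
      rwa [nsmul_eq_mul] at this
    have h2 : ∑ i ∈ (range (2 ^ j / L)).filter (fun i => a * (L:ℝ) / n < ξsq j i), ξsq j i
        ≤ ∑ i ∈ range (2 ^ j / L), ξsq j i :=
      Finset.sum_le_sum_of_subset_of_nonneg (Finset.filter_subset _ _)
        (fun i _ _ => Finset.sum_nonneg fun k _ => sq_nonneg _)
    have h3 : ∑ i ∈ range (2 ^ j / L), ξsq j i = ∑ k ∈ range (2 ^ j / L * L), (θ j k) ^ 2 :=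
      block_sum_eq (fun k => (θ j k) ^ 2) L _
    have h4 : ∑ k ∈ range (2 ^ j / L * L), (θ j k) ^ 2 ≤ ∑ k ∈ range (2 ^ j), (θ j k) ^ 2 :=
      Finset.sum_le_sum_of_subset_of_nonneg
        (Finset.range_subset_range.mpr (Nat.div_mul_le_self _ _)) (fun k _ _ => sq_nonneg _)
    have h5 : (c j : ℝ) * (a * (L:ℝ) / n) ≤ M ^ 2 * r ^ j :=
      (h1.trans (h2.trans (h3 ▸ h4))).trans (hlevel j hj)
    exact (le_div_iff₀ ht0).mpr h5
  have htriv : ∀ j : ℕ, (c j : ℝ) ≤ (2:ℝ) ^ j / L := by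
    intro j
    have h1 : c j ≤ 2 ^ j / L :=
      le_trans (Finset.card_filter_le _ _) (le_of_eq (Finset.card_range _))
    calc (c j : ℝ) ≤ ((2 ^ j / L : ℕ) : ℝ) := by exact_mod_cast h1
      _ ≤ ((2 ^ j : ℕ) : ℝ) / L := Nat.cast_div_le
      _ = (2:ℝ) ^ j / L := by push_cast; ring
  -- cutoff
  have hτ' : (0:ℝ) < 1 + 2 * τ := by linarith
  set x0 : ℝ := (M ^ 2 * n / (a * D)) ^ (1 / (1 + 2 * τ)) with hx0_def
  have hbase0 : 0 < M ^ 2 * (n:ℝ) / (a * D) := by positivity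
  have hx0 : 0 < x0 := Real.rpow_pos_of_pos hbase0 _
  have hx0pow : x0 ^ (1 + 2 * τ) = M ^ 2 * n / (a * D) := by
    rw [hx0_def, ← Real.rpow_mul hbase0.le, one_div, inv_mul_cancel₀ hτ'.ne', Real.rpow_one]
  set j0 : ℕ := ⌈Real.logb 2 x0⌉₊ with hj0_def
  have h2j0 : x0 ≤ (2:ℝ) ^ (j0:ℕ) := by
    have h := Real.rpow_le_rpow_of_exponent_le one_le_two (Nat.le_ceil (Real.logb 2 x0))
    rwa [Real.rpow_logb two_pos (by norm_num) hx0, Real.rpow_natCast] at h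
  have hhead2 : (2:ℝ) ^ (j0:ℕ) - 1 ≤ 2 * x0 := by
    rcases Nat.eq_zero_or_pos j0 with h0 | h0
    · rw [h0]; norm_num; linarith [hx0]
    · have hlog : 0 < Real.logb 2 x0 := by
        by_contra hc
        push_neg at hc
        rw [hj0_def] at h0
        exact absurd (Nat.ceil_pos.mp h0) (not_lt.mpr hc)
      have hj0lt : (j0:ℝ) < Real.logb 2 x0 + 1 := by
        rw [hj0_def]; exact Nat.ceil_lt_add_one hlog.le
      have h2 : (2:ℝ) ^ (j0:ℕ) ≤ (2:ℝ) ^ (Real.logb 2 x0 + 1) := by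
        rw [← Real.rpow_natCast (2:ℝ) j0]
        exact Real.rpow_le_rpow_of_exponent_le one_le_two hj0lt.le
      rw [Real.rpow_add two_pos, Real.rpow_logb two_pos (by norm_num) hx0,
        Real.rpow_one] at h2
      linarith
  -- split the sum
  have hhead : ∑ j ∈ (range J).filter (fun j => j < j0), (c j : ℝ) ≤ 2 * x0 / L := by
    calc ∑ j ∈ (range J).filter (fun j => j < j0), (c j : ℝ)
        ≤ ∑ j ∈ (range J).filter (fun j => j < j0), (2:ℝ) ^ j / L :=
          Finset.sum_le_sum fun j _ => htriv j
      _ ≤ ∑ j ∈ range j0, (2:ℝ) ^ j / L := Finset.sum_le_sum_of_subset_of_nonneg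
          (fun j hj => Finset.mem_range.mpr (Finset.mem_filter.mp hj).2)
          (fun j _ _ => by positivity)
      _ = (∑ j ∈ range j0, (2:ℝ) ^ j) / L := by rw [Finset.sum_div]
      _ = ((2:ℝ) ^ (j0:ℕ) - 1) / L := by
          rw [geom_sum_eq (by norm_num : (2:ℝ) ≠ 1)]; norm_num
      _ ≤ 2 * x0 / L := by gcongr

  have hr_j0 : r ^ j0 ≤ x0 ^ (-(2 * τ)) := by
    have h1 : r ^ j0 = ((2:ℝ) ^ (j0:ℕ)) ^ (-(2 * τ)) := by
      rw [hr_def, ← Real.rpow_natCast ((2:ℝ) ^ (-(2 * τ))) j0,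
        ← Real.rpow_natCast (2:ℝ) j0,
        ← Real.rpow_mul (by norm_num : (0:ℝ) ≤ 2),
        ← Real.rpow_mul (by norm_num : (0:ℝ) ≤ 2), mul_comm]
    rw [h1]
    exact Real.rpow_le_rpow_of_nonpos hx0 h2j0 (by linarith)
  have htail : ∑ j ∈ (range J).filter (fun j => ¬ j < j0), (c j : ℝ) ≤ x0 / L := by
    have step1 : ∑ j ∈ (range J).filter (fun j => ¬ j < j0), (c j : ℝ)
        ≤ ∑ j ∈ (range J).filter (fun j => ¬ j < j0), M ^ 2 * r ^ j / (a * (L:ℝ) / n) :=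
      Finset.sum_le_sum fun j hj => hcount j (Finset.mem_filter.mp hj).1
    have step2 : ∑ j ∈ (range J).filter (fun j => ¬ j < j0), M ^ 2 * r ^ j / (a * (L:ℝ) / n)
        ≤ ∑ j ∈ Finset.Ico j0 (j0 + J), M ^ 2 * r ^ j / (a * (L:ℝ) / n) :=
      Finset.sum_le_sum_of_subset_of_nonneg
        (fun j hj => by
          have h := Finset.mem_filter.mp hj
          exact Finset.mem_Ico.mpr ⟨not_lt.mp h.2,
            lt_of_lt_of_le (Finset.mem_range.mp h.1) (Nat.le_add_left J j0)⟩)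
        (fun j _ _ => by positivity)
    have step3 : ∑ j ∈ Finset.Ico j0 (j0 + J), M ^ 2 * r ^ j / (a * (L:ℝ) / n)
        = M ^ 2 / (a * (L:ℝ) / n) * (r ^ j0 * ∑ i ∈ range J, r ^ i) := by
      rw [Finset.sum_Ico_eq_sum_range, Nat.add_sub_cancel_left, Finset.mul_sum,
        Finset.mul_sum]
      exact Finset.sum_congr rfl fun i _ => by rw [pow_add]; ring
    have step4 : M ^ 2 / (a * (L:ℝ) / n) * (r ^ j0 * ∑ i ∈ range J, r ^ i)
        ≤ M ^ 2 / (a * (L:ℝ) / n) * (x0 ^ (-(2 * τ)) * D⁻¹) := by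
      have hge := geom_tail_le hr0.le hr1 J
      rw [← hD_def] at hge
      have h1 : r ^ j0 * ∑ i ∈ range J, r ^ i ≤ x0 ^ (-(2 * τ)) * D⁻¹ :=
        mul_le_mul hr_j0 hge (Finset.sum_nonneg fun i _ => pow_nonneg hr0.le i)
          (Real.rpow_nonneg hx0.le _)
      exact mul_le_mul_of_nonneg_left h1 (by positivity)
    have step5 : M ^ 2 / (a * (L:ℝ) / n) * (x0 ^ (-(2 * τ)) * D⁻¹) = x0 / L := by
      have h1 : M ^ 2 / (a * (L:ℝ) / n) * (x0 ^ (-(2 * τ)) * D⁻¹)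
          = x0 ^ (1 + 2 * τ) * x0 ^ (-(2 * τ)) / L := by
        rw [hx0pow]
        field_simp
      rw [h1, ← Real.rpow_add hx0]
      have he : 1 + 2 * τ + -(2 * τ) = 1 := by ring
      rw [he, Real.rpow_one]
    calc ∑ j ∈ (range J).filter (fun j => ¬ j < j0), (c j : ℝ)
        ≤ M ^ 2 / (a * (L:ℝ) / n) * (r ^ j0 * ∑ i ∈ range J, r ^ i) :=
          (step1.trans step2).trans_eq step3
      _ ≤ M ^ 2 / (a * (L:ℝ) / n) * (x0 ^ (-(2 * τ)) * D⁻¹) := step4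
      _ = x0 / L := step5
  have htotal : (I.card : ℝ) ≤ 3 * x0 / L := by
    rw [hIcard, ← Finset.sum_filter_add_sum_filter_not (range J) (fun j => j < j0)]
    have h := add_le_add hhead htail
    have h3 : 2 * x0 / (L:ℝ) + x0 / L = 3 * x0 / L := by ring
    linarith
  -- identify the right-hand side
  have hRHSeq : 3 * D ^ (-(1 / (1 + 2 * τ))) * a ^ (-(1 / (1 + 2 * τ))) * (L:ℝ)⁻¹ *
      M ^ (2 / (1 + 2 * τ)) * (n:ℝ) ^ (1 / (1 + 2 * τ)) = 3 * x0 / L := by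
    rw [hx0_def, Real.div_rpow (by positivity) (by positivity),
      Real.mul_rpow (by positivity) hn0.le, Real.mul_rpow ha.le hD0.le,
      Real.rpow_neg ha.le, Real.rpow_neg hD0.le, ← Real.rpow_natCast M 2,
      ← Real.rpow_mul hM.le]
    have he : ((2:ℕ):ℝ) * (1 / (1 + 2 * τ)) = 2 / (1 + 2 * τ) := by push_cast; ring
    rw [he]
    field_simp
  rw [← hRHSeq] at htotal
  exact htotal
end

section
/- Let y_i = θ_i + σ z_i for i = 1,...,L with z_i i.i.d. N(0,1). Let λ* be the root of λ − log λ = 5 and, for τ > 0, let λ_τ > 1 be the root of λ − log λ = 1 + 4τ/(1+2τ). If Σ_{i=1}^L θ_i² ≤ (√λ* − √λ_τ)² L σ², then P(Σ_{i=1}^L y_i² ≥ λ* L σ²) ≤ P(Σ_{i=1}^L z_i² ≥ λ_τ L) ≤ (1/2) exp(−(2τ/(1+2τ)) L). -/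
open MeasureTheory ProbabilityTheory Real

namespace BlockTailAux
open MeasureTheory ProbabilityTheory Real Set

noncomputable def hfun (n : ℕ) (y : ℝ) : ℝ := y ^ n * Real.exp (-(1/2) * y^2)

lemma hfun_nonneg (n : ℕ) {y : ℝ} (hy : 0 ≤ y) : 0 ≤ hfun n y := by
  unfold hfun; positivity

lemma hfun_integrableOn (n : ℕ) {s : Set ℝ} (hs : s ⊆ Ioi 0) :
    IntegrableOn (hfun n) s := by
  have h1 : IntegrableOn (fun x : ℝ => x ^ (n : ℝ) * Real.exp (-(1/2) * x ^ 2)) (Ioi 0) :=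
    integrableOn_rpow_mul_exp_neg_mul_sq (by norm_num) (lt_of_lt_of_le (by norm_num) (Nat.cast_nonneg n))
  have h2 : IntegrableOn (hfun n) (Ioi 0) := by
    refine h1.congr_fun (fun x hx => ?_) measurableSet_Ioi
    unfold hfun
    simp only [Real.rpow_natCast]
  exact h2.mono_set hs

lemma half_log_le {u : ℝ} (hu : 1 ≤ u) : Real.log u ≤ (u - u⁻¹) / 2 := by
  have key : ∀ x : ℝ, 0 < x →
      HasDerivAt (fun y : ℝ => (y - y⁻¹)/2 - Real.log y) ((1 + (x^2)⁻¹)/2 - x⁻¹) x := by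
    intro x hx
    have h1 : HasDerivAt (fun y : ℝ => y⁻¹) (-(x^2)⁻¹) x := by
      simpa using hasDerivAt_inv hx.ne'
    have h2 : HasDerivAt (fun y : ℝ => y - y⁻¹) (1 - -(x^2)⁻¹) x := (hasDerivAt_id x).sub h1
    have h3 : HasDerivAt (fun y : ℝ => (y - y⁻¹)/2 - Real.log y) ((1 - -(x^2)⁻¹)/2 - x⁻¹) x :=
      (h2.div_const 2).sub (Real.hasDerivAt_log hx.ne')
    convert h3 using 1
    ring
  have mono : MonotoneOn (fun y : ℝ => (y - y⁻¹)/2 - Real.log y) (Ici 1) := by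
    apply monotoneOn_of_deriv_nonneg (convex_Ici 1)
    · exact fun y hy =>
        ((key y (lt_of_lt_of_le one_pos hy)).differentiableAt.continuousAt).continuousWithinAt
    · intro y hy
      rw [interior_Ici] at hy
      exact ((key y (lt_trans one_pos hy)).differentiableAt).differentiableWithinAt
    · intro y hy
      rw [interior_Ici] at hy
      rw [(key y (lt_trans one_pos hy)).deriv]
      have hy0 : (0:ℝ) < y := lt_trans one_pos hy
      have h4 : (y^2)⁻¹ = (y⁻¹)^2 := by rw [inv_pow]
      nlinarith [sq_nonneg (1 - y⁻¹)]
  have h0 : (fun y : ℝ => (y - y⁻¹)/2 - Real.log y) 1 = 0 := by norm_num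
  have := mono (self_mem_Ici) (by exact hu) hu
  rw [h0] at this
  linarith

lemma inv_pointwise (n : ℕ) {b y : ℝ} (hb2 : (n:ℝ) + 1 = b^2) (hy : y ∈ Ioo 0 b) :
    (b^2 / y^2) * hfun n (b^2 / y) ≤ hfun n y := by
  obtain ⟨hy0, hyb⟩ := hy
  have hb0 : 0 < b := lt_trans hy0 hyb
  set u : ℝ := b^2 / y^2 with hu_def
  have hu1 : 1 ≤ u := by
    rw [hu_def, le_div_iff₀ (by positivity)]
    nlinarith
  have hu0 : 0 < u := lt_of_lt_of_le one_pos hu1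
  have huy : b^2 / y = u * y := by rw [hu_def]; field_simp
  have huyy : u * y^2 = b^2 := by rw [hu_def, div_mul_cancel₀ _ (by positivity)]
  rw [huy]
  unfold hfun
  have expand : u * ((u*y)^n * Real.exp (-(1/2) * (u*y)^2))
      = u^(n+1) * (y^n * Real.exp (-(1/2) * (u*y)^2)) := by
    rw [mul_pow]; ring
  rw [expand]
  have hkey : u^(n+1) * Real.exp (-(1/2)*(u*y)^2) ≤ Real.exp (-(1/2)*y^2) := by
    have hlog : Real.log u ≤ (u - u⁻¹)/2 := half_log_le hu1
    have hpow : u^(n+1) = Real.exp (((n:ℝ)+1) * Real.log u) := by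
      rw [show ((n:ℝ)+1) = ((n+1 : ℕ):ℝ) by push_cast; ring, Real.exp_nat_mul,
        Real.exp_log hu0]
    rw [hpow, ← Real.exp_add, Real.exp_le_exp]
    have h1 : ((n:ℝ)+1) * Real.log u = u * y^2 * Real.log u := by rw [hb2, ← huyy]
    have h2 : u * y^2 * Real.log u ≤ u * y^2 * ((u - u⁻¹)/2) :=
      mul_le_mul_of_nonneg_left hlog (by positivity)
    have h3 : u * y^2 * ((u - u⁻¹)/2) = (u^2*y^2 - y^2)/2 := by
      field_simp
    have h4 : (u*y)^2 = u^2 * y^2 := by ring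
    rw [h1, h4]
    calc u * y^2 * Real.log u + -(1/2) * (u^2*y^2)
        ≤ (u^2*y^2 - y^2)/2 + -(1/2) * (u^2*y^2) := by linarith [h2, h3.symm ▸ h2]
      _ = -(1/2)*y^2 := by ring
  calc u^(n+1) * (y^n * Real.exp (-(1/2) * (u*y)^2))
      = y^n * (u^(n+1) * Real.exp (-(1/2) * (u*y)^2)) := by ring
    _ ≤ y^n * Real.exp (-(1/2)*y^2) := by
        apply mul_le_mul_of_nonneg_left hkey (by positivity)

lemma tail_le_head (n : ℕ) {b : ℝ} (hb : 0 < b) (hb2 : (n:ℝ) + 1 = b^2) :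
    ∫ y in Ioi b, hfun n y ≤ ∫ y in Ioo 0 b, hfun n y := by
  have himg : (fun y : ℝ => b^2 / y) '' (Ioo 0 b) = Ioi b := by
    ext w
    simp only [mem_image, mem_Ioi, mem_Ioo]
    constructor
    · rintro ⟨y, ⟨hy0, hyb⟩, rfl⟩
      rw [lt_div_iff₀ hy0]
      nlinarith
    · intro hw
      have hw0 : 0 < w := lt_trans hb hw
      refine ⟨b^2 / w, ⟨by positivity, ?_⟩, by field_simp⟩
      rw [div_lt_iff₀ hw0]
      nlinarith
  have hderiv : ∀ y ∈ Ioo 0 b, HasDerivWithinAt (fun y : ℝ => b^2 / y) (-(b^2) / y^2) (Ioo 0 b) y := by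
    intro y hy
    have h1 : HasDerivAt (fun y : ℝ => b^2 * y⁻¹) (b^2 * -(y^2)⁻¹) y :=
      (hasDerivAt_inv hy.1.ne').const_mul (b^2)
    have h2 : HasDerivAt (fun y : ℝ => b^2 / y) (-(b^2) / y^2) y := by
      simp_rw [div_eq_mul_inv]
      convert h1 using 1
      field_simp
    exact h2.hasDerivWithinAt
  have hinj : InjOn (fun y : ℝ => b^2 / y) (Ioo 0 b) := by
    intro y1 h1 y2 h2 he
    simp only at he
    rw [div_eq_div_iff h1.1.ne' h2.1.ne'] at he
    exact mul_left_cancel₀ (by positivity) he.symm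
  have hchg := integral_image_eq_integral_abs_deriv_smul measurableSet_Ioo hderiv hinj (hfun n)
  rw [himg] at hchg
  rw [hchg]
  have hIleft : IntegrableOn (fun y => |(-(b^2) / y^2)| • hfun n (b^2/y)) (Ioo 0 b) := by
    rw [← integrableOn_image_iff_integrableOn_abs_deriv_smul measurableSet_Ioo hderiv hinj]
    rw [himg]
    exact hfun_integrableOn n (fun x hx => lt_trans hb hx)
  apply setIntegral_mono_on hIleft
    (hfun_integrableOn n (fun x hx => hx.1)) measurableSet_Ioo
  intro y hy
  have habs : |(-(b^2) / y^2)| = b^2 / y^2 := by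
    rw [abs_div, abs_neg, abs_of_nonneg (by positivity : (0:ℝ) ≤ b^2),
      abs_of_nonneg (by positivity : (0:ℝ) ≤ y^2)]
  rw [smul_eq_mul, habs]
  exact inv_pointwise n hb2 hy

lemma two_tail_le (n : ℕ) {b : ℝ} (hb : 0 < b) (hb2 : (n:ℝ) + 1 = b^2) :
    2 * ∫ y in Ioi b, hfun n y ≤ ∫ y in Ioi (0:ℝ), hfun n y := by
  have hset : Ioo 0 b ∪ Ici b = Ioi 0 := by
    ext x
    simp only [mem_union, mem_Ioo, mem_Ici, mem_Ioi]
    constructor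
    · rintro (⟨h1, _⟩ | h)
      · exact h1
      · exact lt_of_lt_of_le hb h
    · intro hx
      rcases lt_or_ge x b with h | h
      · exact Or.inl ⟨hx, h⟩
      · exact Or.inr h
  have hsplit : ∫ y in Ioi (0:ℝ), hfun n y
      = (∫ y in Ioo 0 b, hfun n y) + ∫ y in Ici b, hfun n y := by
    rw [← hset, setIntegral_union ((Iio_disjoint_Ici le_rfl).mono_left Ioo_subset_Iio_self)
      measurableSet_Ici (hfun_integrableOn n (fun x hx => hx.1))
      (hfun_integrableOn n (fun x hx => lt_of_lt_of_le hb hx))]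
  have hIci : ∫ y in Ici b, hfun n y = ∫ y in Ioi b, hfun n y :=
    integral_Ici_eq_integral_Ioi
  have := tail_le_head n hb hb2
  rw [hsplit, hIci]
  linarith

lemma scale_bound (L : ℕ) (hL : 1 ≤ L) {lam : ℝ} (hlam : 1 < lam) :
    ∫ y in Ioi (Real.sqrt lam * Real.sqrt L), hfun (L-1) y
      ≤ (Real.sqrt lam)^L * Real.exp (-(lam - 1) * L / 2)
        * ∫ y in Ioi (Real.sqrt L), hfun (L-1) y := by
  have hlam0 : (0:ℝ) < lam := lt_trans one_pos hlam
  have hsl : 0 < Real.sqrt lam := Real.sqrt_pos.2 hlam0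
  have hsL : 0 < Real.sqrt L := Real.sqrt_pos.2 (by exact_mod_cast Nat.lt_of_lt_of_le Nat.zero_lt_one hL)
  have himg : (fun y : ℝ => Real.sqrt lam * y) '' (Ioi (Real.sqrt L))
      = Ioi (Real.sqrt lam * Real.sqrt L) := by
    ext w
    simp only [mem_image, mem_Ioi]
    constructor
    · rintro ⟨y, hy, rfl⟩
      exact mul_lt_mul_of_pos_left hy hsl
    · intro hw
      refine ⟨w / Real.sqrt lam, ?_, by field_simp⟩
      rw [lt_div_iff₀ hsl] at *
      nlinarith
  have hderiv : ∀ y ∈ Ioi (Real.sqrt L),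
      HasDerivWithinAt (fun y : ℝ => Real.sqrt lam * y) (Real.sqrt lam) (Ioi (Real.sqrt L)) y :=
    fun y _ => ((hasDerivAt_id y).const_mul (Real.sqrt lam)).hasDerivWithinAt.congr_deriv (by ring)
  have hinj : InjOn (fun y : ℝ => Real.sqrt lam * y) (Ioi (Real.sqrt L)) :=
    fun y1 _ y2 _ he => mul_left_cancel₀ hsl.ne' he
  have hchg := integral_image_eq_integral_abs_deriv_smul measurableSet_Ioi hderiv hinj (hfun (L-1))
  rw [himg] at hchg
  rw [hchg]
  have hIleft : IntegrableOn (fun y => |Real.sqrt lam| • hfun (L-1) (Real.sqrt lam * y))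
      (Ioi (Real.sqrt L)) := by
    rw [← integrableOn_image_iff_integrableOn_abs_deriv_smul measurableSet_Ioi hderiv hinj]
    rw [himg]
    exact hfun_integrableOn (L-1) (fun x hx => lt_trans (by positivity : (0:ℝ) < Real.sqrt lam * Real.sqrt L) hx)
  have hIright : IntegrableOn
      (fun y => (Real.sqrt lam)^L * Real.exp (-(lam - 1) * L / 2) * hfun (L-1) y)
      (Ioi (Real.sqrt L)) :=
    ((hfun_integrableOn (L-1) (fun x hx => lt_trans hsL hx))).const_mul _
  have hmono := setIntegral_mono_on hIleft hIright measurableSet_Ioi ?_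
  · calc ∫ y in Ioi (Real.sqrt L), |Real.sqrt lam| • hfun (L-1) (Real.sqrt lam * y)
        ≤ ∫ y in Ioi (Real.sqrt L),
            (Real.sqrt lam)^L * Real.exp (-(lam - 1) * L / 2) * hfun (L-1) y := hmono
      _ = (Real.sqrt lam)^L * Real.exp (-(lam - 1) * L / 2)
            * ∫ y in Ioi (Real.sqrt L), hfun (L-1) y := integral_const_mul _ _
  · intro y hy
    have hyL : (L:ℝ) ≤ y^2 := by
      have : Real.sqrt L ≤ y := le_of_lt hy
      nlinarith [Real.sq_sqrt (show (0:ℝ) ≤ L by positivity), hsL]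
    have hy0 : 0 < y := lt_trans hsL hy
    rw [smul_eq_mul, abs_of_nonneg hsl.le]
    unfold hfun
    have hexpand : Real.sqrt lam * ((Real.sqrt lam * y)^(L-1) * Real.exp (-(1/2) * (Real.sqrt lam * y)^2))
        = (Real.sqrt lam)^L * (y^(L-1) * Real.exp (-(1/2) * (lam * y^2))) := by
      rw [mul_pow]
      have h1 : Real.sqrt lam * (Real.sqrt lam)^(L-1) = (Real.sqrt lam)^L := by
        rw [← pow_succ']
        congr 1
        omega
      have h2 : (Real.sqrt lam * y)^2 = lam * y^2 := by
        rw [mul_pow, Real.sq_sqrt hlam0.le]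
      rw [h2, ← h1]
      ring
    rw [hexpand]
    have hexp : Real.exp (-(1/2) * (lam * y^2))
        ≤ Real.exp (-(lam - 1) * L / 2) * Real.exp (-(1/2) * y^2) := by
      rw [← Real.exp_add, Real.exp_le_exp]
      nlinarith [mul_le_mul_of_nonneg_left hyL (le_of_lt (sub_pos.2 hlam))]
    calc (Real.sqrt lam)^L * (y^(L-1) * Real.exp (-(1/2) * (lam * y^2)))
        ≤ (Real.sqrt lam)^L * (y^(L-1) * (Real.exp (-(lam - 1) * L / 2) * Real.exp (-(1/2) * y^2))) := by
          apply mul_le_mul_of_nonneg_left _ (by positivity)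
          exact mul_le_mul_of_nonneg_left hexp (by positivity)
      _ = (Real.sqrt lam)^L * Real.exp (-(lam - 1) * L / 2) * (y^(L-1) * Real.exp (-(1/2) * y^2)) := by ring


noncomputable def Jfun (n : ℕ) (a : ℝ) : ℝ :=
  ∫ y in Ioi (0:ℝ), y ^ n * (Ici a).indicator (fun t => Real.exp (-(1/2) * t^2)) y

lemma gpdf_eq (t : ℝ) :
    gaussianPDFReal 0 1 t = (Real.sqrt (2*π))⁻¹ * Real.exp (-(1/2) * t^2) := by
  simp [gaussianPDFReal]
  ring_nf
  exact Or.inl trivial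



lemma pi_gauss_eq (L : ℕ) :
    Measure.pi (fun _ : Fin L => gaussianReal 0 1)
      = (volume : Measure (Fin L → ℝ)).withDensity
          (fun x => ENNReal.ofReal (∏ i, gaussianPDFReal 0 1 (x i))) := by
  apply Measure.pi_eq
  intro s hs
  rw [withDensity_apply _ (MeasurableSet.univ_pi hs)]
  have hint : Integrable (fun x : Fin L → ℝ => ∏ i, gaussianPDFReal 0 1 (x i)) :=
    Integrable.fintype_prod (fun i => integrable_gaussianPDFReal 0 1)
  rw [← ofReal_integral_eq_lintegral_ofReal hint.integrableOn
    (Filter.Eventually.of_forall (fun x => Finset.prod_nonneg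
      (fun i _ => gaussianPDFReal_nonneg 0 1 (x i))))]
  have hind : ∫ x in Set.pi univ s, ∏ i, gaussianPDFReal 0 1 (x i)
      = ∫ x : Fin L → ℝ, ∏ i, (s i).indicator (gaussianPDFReal 0 1) (x i) := by
    rw [← integral_indicator (MeasurableSet.univ_pi hs)]
    congr 1
    funext x
    by_cases hx : x ∈ Set.pi univ s
    · rw [Set.indicator_of_mem hx]
      exact Finset.prod_congr rfl (fun i _ =>
        (Set.indicator_of_mem (hx i (mem_univ i)) _).symm)
    · rw [Set.indicator_of_notMem hx]
      rw [Set.mem_univ_pi] at hx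
      push_neg at hx
      obtain ⟨i, hi⟩ := hx
      exact (Finset.prod_eq_zero (Finset.mem_univ i)
        (Set.indicator_of_notMem hi _)).symm
  rw [hind, integral_fintype_prod_volume_eq_prod (𝕜 := ℝ)
    (f := fun (i : Fin L) => (s i).indicator (gaussianPDFReal 0 1))]
  rw [ENNReal.ofReal_prod_of_nonneg (fun i _ => by
    rw [integral_indicator (hs i)]
    exact setIntegral_nonneg (hs i) (fun x _ => gaussianPDFReal_nonneg 0 1 x))]
  exact Finset.prod_congr rfl (fun i _ => by
    rw [integral_indicator (hs i), ← gaussianReal_apply_eq_integral 0 one_ne_zero (s i)])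

lemma key_repr (L : ℕ) (hL : 1 ≤ L) {c : ℝ} (hc : 0 ≤ c) :
    ((Measure.pi fun _ : Fin L => gaussianReal 0 1) {x | c ≤ ∑ i, (x i)^2}).toReal
      = ((L:ℝ) * (volume (Metric.ball (0 : EuclideanSpace ℝ (Fin L)) 1)).toReal
          * ((Real.sqrt (2*π))⁻¹)^L) * Jfun (L-1) (Real.sqrt c) := by
  haveI : Nonempty (Fin L) := ⟨⟨0, hL⟩⟩
  have hA : MeasurableSet {x : Fin L → ℝ | c ≤ ∑ i, (x i)^2} := by
    apply measurableSet_le measurable_const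
    exact Finset.measurable_sum _ (fun i _ => (measurable_pi_apply i).pow_const 2)
  have hint : Integrable (fun x : Fin L → ℝ => ∏ i, gaussianPDFReal 0 1 (x i)) :=
    Integrable.fintype_prod (fun i => integrable_gaussianPDFReal 0 1)
  have hnn : ∀ x : Fin L → ℝ, 0 ≤ ∏ i, gaussianPDFReal 0 1 (x i) :=
    fun x => Finset.prod_nonneg (fun i _ => gaussianPDFReal_nonneg 0 1 (x i))
  rw [pi_gauss_eq, withDensity_apply _ hA,
    ← ofReal_integral_eq_lintegral_ofReal hint.integrableOn
      (Filter.Eventually.of_forall hnn),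
    ENNReal.toReal_ofReal (setIntegral_nonneg hA (fun x _ => hnn x)),
    ← integral_indicator hA]
  set e := (MeasurableEquiv.toLp 2 (Fin L → ℝ)).symm with he
  rw [← (EuclideanSpace.volume_preserving_symm_measurableEquiv_toLp (Fin L)).integral_comp
    (MeasurableEquiv.measurableEmbedding _)
    ({x : Fin L → ℝ | c ≤ ∑ i, (x i)^2}.indicator
      (fun x => ∏ i, gaussianPDFReal 0 1 (x i)))]
  have hnormsq : ∀ x : EuclideanSpace ℝ (Fin L), ‖x‖^2 = ∑ i, (x i)^2 := by
    intro x
    rw [EuclideanSpace.norm_eq, Real.sq_sqrt (by positivity)]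
    congr 1; funext i; rw [Real.norm_eq_abs, sq_abs]
  have hpoint : ∀ x : EuclideanSpace ℝ (Fin L),
      ({x : Fin L → ℝ | c ≤ ∑ i, (x i)^2}.indicator
          (fun x => ∏ i, gaussianPDFReal 0 1 (x i))) (e x)
        = ((Real.sqrt (2*π))⁻¹)^L
            * (Ici (Real.sqrt c)).indicator (fun t => Real.exp (-(1/2) * t^2)) ‖x‖ := by
    intro x
    have hval : (∏ i, gaussianPDFReal 0 1 (x i))
        = ((Real.sqrt (2*π))⁻¹)^L * Real.exp (-(1/2) * ‖x‖^2) := by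
      calc ∏ i, gaussianPDFReal 0 1 (x i)
          = ∏ i : Fin L, ((Real.sqrt (2*π))⁻¹ * Real.exp (-(1/2) * (x i)^2)) :=
            Finset.prod_congr rfl (fun i _ => gpdf_eq (x i))
        _ = ((Real.sqrt (2*π))⁻¹)^L * ∏ i : Fin L, Real.exp (-(1/2) * (x i)^2) := by
            rw [Finset.prod_mul_distrib, Finset.prod_const, Finset.card_univ, Fintype.card_fin]
        _ = ((Real.sqrt (2*π))⁻¹)^L * Real.exp (-(1/2) * ‖x‖^2) := by
            rw [← Real.exp_sum, hnormsq, Finset.mul_sum]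
    have hmem : (e x ∈ {x : Fin L → ℝ | c ≤ ∑ i, (x i)^2}) ↔ Real.sqrt c ≤ ‖x‖ := by
      have : (e x ∈ {x : Fin L → ℝ | c ≤ ∑ i, (x i)^2}) ↔ c ≤ ∑ i, (x i)^2 := Iff.rfl
      rw [this, ← hnormsq x]
      constructor
      · intro h
        calc Real.sqrt c ≤ Real.sqrt (‖x‖^2) := Real.sqrt_le_sqrt h
          _ = ‖x‖ := Real.sqrt_sq (norm_nonneg x)
      · intro h
        nlinarith [Real.sq_sqrt hc, Real.sqrt_nonneg c, norm_nonneg x]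
    by_cases hm : Real.sqrt c ≤ ‖x‖
    · rw [Set.indicator_of_mem (hmem.2 hm), Set.indicator_of_mem (mem_Ici.mpr hm) (fun t => Real.exp (-(1/2) * t^2))]
      exact hval
    · rw [Set.indicator_of_notMem (fun hmm => hm (hmem.1 hmm)),
        Set.indicator_of_notMem (fun hmm => hm (mem_Ici.mp hmm)) (fun t => Real.exp (-(1/2) * t^2)), mul_zero]
  rw [show (fun x : EuclideanSpace ℝ (Fin L) =>
      ({x : Fin L → ℝ | c ≤ ∑ i, (x i)^2}.indicator
          (fun x => ∏ i, gaussianPDFReal 0 1 (x i))) (e x))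
    = fun x : EuclideanSpace ℝ (Fin L) => (fun r : ℝ => ((Real.sqrt (2*π))⁻¹)^L
        * (Ici (Real.sqrt c)).indicator (fun t => Real.exp (-(1/2) * t^2)) r) ‖x‖
    from funext hpoint]
  rw [integral_fun_norm_addHaar volume
    (fun r : ℝ => ((Real.sqrt (2*π))⁻¹)^L
      * (Ici (Real.sqrt c)).indicator (fun t => Real.exp (-(1/2) * t^2)) r)]
  rw [finrank_euclideanSpace_fin]
  rw [nsmul_eq_mul, smul_eq_mul]
  have : ∫ y in Ioi (0:ℝ), y ^ (L-1) • (((Real.sqrt (2*π))⁻¹)^L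
      * (Ici (Real.sqrt c)).indicator (fun t => Real.exp (-(1/2) * t^2)) y)
      = ((Real.sqrt (2*π))⁻¹)^L * Jfun (L-1) (Real.sqrt c) := by
    unfold Jfun
    rw [← integral_const_mul]
    congr 1
    funext y
    rw [smul_eq_mul]
    ring
  rw [this]
  rw [measureReal_def]
  ring


lemma map_eq_pi {Ω : Type*} [MeasurableSpace Ω] (μ : Measure Ω) [IsProbabilityMeasure μ]
    (L : ℕ) (z : Fin L → Ω → ℝ) (hmeas : ∀ i, Measurable (z i))
    (hindep : iIndepFun z μ)
    (hgauss : ∀ i, Measure.map (z i) μ = gaussianReal 0 1) :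
    Measure.map (fun ω i => z i ω) μ = Measure.pi (fun _ : Fin L => gaussianReal 0 1) := by
  refine (Measure.pi_eq fun s hs => ?_).symm
  rw [Measure.map_apply (measurable_pi_lambda _ hmeas) (MeasurableSet.univ_pi hs)]
  have hpre : (fun ω i => z i ω) ⁻¹' (Set.pi univ s) = ⋂ i ∈ Finset.univ, z i ⁻¹' s i := by
    ext ω
    simp [Set.mem_univ_pi]
  rw [hpre, hindep.measure_inter_preimage_eq_mul Finset.univ (fun i _ => hs i)]
  exact Finset.prod_congr rfl (fun i _ => by
    rw [← Measure.map_apply (hmeas i) (hs i), hgauss i])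


lemma lamT_le_lamS {τ lamS lamT : ℝ} (hτ : 0 < τ) (hlamS1 : 1 < lamS)
    (hlamS : lamS - Real.log lamS = 5) (hlamT1 : 1 < lamT)
    (hlamT : lamT - Real.log lamT = 1 + 4 * τ / (1 + 2 * τ)) : lamT ≤ lamS := by
  by_contra hcon
  push_neg at hcon
  have hS0 : (0:ℝ) < lamS := lt_trans one_pos hlamS1
  have hT0 : (0:ℝ) < lamT := lt_trans one_pos hlamT1
  have hmono : lamS - Real.log lamS ≤ lamT - Real.log lamT := by
    have h1 : Real.log (lamT/lamS) ≤ lamT/lamS - 1 :=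
      Real.log_le_sub_one_of_pos (by positivity)
    have h2 : Real.log (lamT/lamS) = Real.log lamT - Real.log lamS :=
      Real.log_div hT0.ne' hS0.ne'
    have h3 : lamT / lamS - 1 ≤ lamT - lamS := by
      rw [div_sub_one hS0.ne', div_le_iff₀ hS0]
      nlinarith
    linarith
  rw [hlamS, hlamT] at hmono
  have : 4*τ/(1+2*τ) < 2 := by
    rw [div_lt_iff₀ (by positivity)]
    linarith
  linarith

lemma minkowski_step (L : ℕ) {σ : ℝ} (hσ : 0 < σ) (θ w : Fin L → ℝ) {lamS lamT : ℝ}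
    (hT0 : 0 ≤ lamT) (hTS : lamT ≤ lamS)
    (hθ : ∑ i, (θ i)^2 ≤ (Real.sqrt lamS - Real.sqrt lamT)^2 * L * σ^2)
    (hy : lamS * L * σ^2 ≤ ∑ i, (θ i + σ * w i)^2) :
    lamT * L ≤ ∑ i, (w i)^2 := by
  have hS0 : 0 ≤ lamS := le_trans hT0 hTS
  have hL0 : (0:ℝ) ≤ (L:ℝ) := Nat.cast_nonneg L
  have hD : 0 ≤ Real.sqrt lamS - Real.sqrt lamT := by
    have := Real.sqrt_le_sqrt hTS
    linarith
  set u : EuclideanSpace ℝ (Fin L) := WithLp.toLp 2 (fun i => θ i) with hu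
  set v : EuclideanSpace ℝ (Fin L) := WithLp.toLp 2 (fun i => σ * w i) with hv
  have hnorm : ∀ x : EuclideanSpace ℝ (Fin L), ‖x‖ = Real.sqrt (∑ i, (x i)^2) := by
    intro x
    rw [EuclideanSpace.norm_eq]
    congr 1
    exact Finset.sum_congr rfl (fun i _ => by rw [Real.norm_eq_abs, sq_abs])
  have htri : ‖u + v‖ ≤ ‖u‖ + ‖v‖ := norm_add_le u v
  have huv : ‖u + v‖ = Real.sqrt (∑ i, (θ i + σ * w i)^2) := by
    rw [hnorm]
    rfl
  have hun : ‖u‖ = Real.sqrt (∑ i, (θ i)^2) := by rw [hnorm]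
  have hvn : ‖v‖ = σ * Real.sqrt (∑ i, (w i)^2) := by
    rw [hnorm]
    have : ∑ i, (v i)^2 = σ^2 * ∑ i, (w i)^2 := by
      rw [Finset.mul_sum]
      exact Finset.sum_congr rfl (fun i _ => by rw [hv]; ring)
    rw [this, Real.sqrt_mul (by positivity), Real.sqrt_sq hσ.le]
  have hw0 : (0:ℝ) ≤ ∑ i, (w i)^2 := Finset.sum_nonneg (fun i _ => sq_nonneg _)
  -- lower bound for ‖u+v‖
  have hlow : Real.sqrt lamS * Real.sqrt L * σ ≤ ‖u + v‖ := by
    rw [huv]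
    have h1 : (Real.sqrt lamS * Real.sqrt L * σ)^2 = lamS * L * σ^2 := by
      rw [mul_pow, mul_pow, Real.sq_sqrt hS0, Real.sq_sqrt hL0]
    calc Real.sqrt lamS * Real.sqrt L * σ
        = Real.sqrt ((Real.sqrt lamS * Real.sqrt L * σ)^2) :=
          (Real.sqrt_sq (by positivity)).symm
      _ = Real.sqrt (lamS * L * σ^2) := by rw [h1]
      _ ≤ Real.sqrt (∑ i, (θ i + σ * w i)^2) := Real.sqrt_le_sqrt hy
  -- upper bound for ‖u‖
  have hup : ‖u‖ ≤ (Real.sqrt lamS - Real.sqrt lamT) * Real.sqrt L * σ := by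
    rw [hun]
    have h1 : ((Real.sqrt lamS - Real.sqrt lamT) * Real.sqrt L * σ)^2
        = (Real.sqrt lamS - Real.sqrt lamT)^2 * L * σ^2 := by
      rw [mul_pow, mul_pow, Real.sq_sqrt hL0]
    calc Real.sqrt (∑ i, (θ i)^2)
        ≤ Real.sqrt ((Real.sqrt lamS - Real.sqrt lamT)^2 * L * σ^2) := Real.sqrt_le_sqrt hθ
      _ = Real.sqrt (((Real.sqrt lamS - Real.sqrt lamT) * Real.sqrt L * σ)^2) := by rw [h1]
      _ = (Real.sqrt lamS - Real.sqrt lamT) * Real.sqrt L * σ := Real.sqrt_sq (by positivity)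
  have hfin : Real.sqrt lamT * Real.sqrt L * σ ≤ σ * Real.sqrt (∑ i, (w i)^2) := by
    have := le_trans hlow htri
    rw [hvn] at this
    nlinarith [this, hup]
  have hdiv : Real.sqrt lamT * Real.sqrt L ≤ Real.sqrt (∑ i, (w i)^2) := by
    have h := mul_le_mul_of_nonneg_left hfin (le_of_lt (inv_pos.2 hσ))
    calc Real.sqrt lamT * Real.sqrt L
        = σ⁻¹ * (Real.sqrt lamT * Real.sqrt L * σ) := by field_simp
      _ ≤ σ⁻¹ * (σ * Real.sqrt (∑ i, (w i)^2)) := by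
          apply mul_le_mul_of_nonneg_left hfin (le_of_lt (inv_pos.2 hσ))
      _ = Real.sqrt (∑ i, (w i)^2) := by field_simp
  nlinarith [Real.sq_sqrt hT0, Real.sq_sqrt hL0, Real.sq_sqrt hw0,
    Real.sqrt_nonneg lamT, Real.sqrt_nonneg (L:ℝ), Real.sqrt_nonneg (∑ i, (w i)^2), hdiv,
    mul_le_mul_of_nonneg_left hdiv (mul_nonneg (Real.sqrt_nonneg lamT) (Real.sqrt_nonneg (L:ℝ)))]


lemma Jfun_eq_tail (n : ℕ) {a : ℝ} (ha : 0 < a) :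
    Jfun n a = ∫ y in Ioi a, hfun n y := by
  unfold Jfun
  have h1 : ∀ y : ℝ, y ^ n * (Ici a).indicator (fun t => Real.exp (-(1/2) * t^2)) y
      = (Ici a).indicator (hfun n) y := by
    intro y
    by_cases hy : y ∈ Ici a
    · rw [Set.indicator_of_mem hy, Set.indicator_of_mem hy]
      rfl
    · rw [Set.indicator_of_notMem hy, Set.indicator_of_notMem hy, mul_zero]
  simp_rw [h1]
  rw [integral_indicator measurableSet_Ici, Measure.restrict_restrict measurableSet_Ici,
    show Ici a ∩ Ioi 0 = Ici a from
      inter_eq_self_of_subset_left (fun y (hy : y ∈ Ici a) => lt_of_lt_of_le ha hy)]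
  exact integral_Ici_eq_integral_Ioi

lemma Jfun_zero (n : ℕ) : Jfun n 0 = ∫ y in Ioi (0:ℝ), hfun n y := by
  unfold Jfun
  apply setIntegral_congr_fun measurableSet_Ioi
  intro y hy
  have hmem : y ∈ Ici (0:ℝ) := mem_Ici.mpr (le_of_lt hy)
  simp only [Set.indicator_of_mem hmem]
  rfl

lemma const_eq (L : ℕ) {lamT τ : ℝ} (hτ : 0 < τ) (hlamT1 : 1 < lamT)
    (hlamT : lamT - Real.log lamT = 1 + 4 * τ / (1 + 2 * τ)) :
    (Real.sqrt lamT)^L * Real.exp (-(lamT - 1) * L / 2)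
      = Real.exp (-(2 * τ / (1 + 2 * τ)) * L) := by
  have hpos : (0:ℝ) < lamT := lt_trans one_pos hlamT1
  have h1 : (Real.sqrt lamT)^L = Real.exp (L * (Real.log lamT / 2)) := by
    rw [← Real.exp_log (pow_pos (Real.sqrt_pos.2 hpos) L), Real.log_pow,
      Real.log_sqrt hpos.le]
  rw [h1, ← Real.exp_add, Real.exp_eq_exp]
  have hlog : Real.log lamT = lamT - 1 - 4*τ/(1+2*τ) := by linarith
  rw [hlog]
  ring

end BlockTailAux

/-- Lemma 4(i): if the block signal energy is small, `Σ θ_i² ≤ (√λ* - √λ_τ)² L σ²`, then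
`P(Σ y_i² ≥ λ* L σ²) ≤ P(Σ z_i² ≥ λ_τ L) ≤ (1/2) exp(-(2τ/(1+2τ)) L)`, where
`λ* - log λ* = 5` and `λ_τ - log λ_τ = 1 + 4τ/(1+2τ)`. -/
theorem block_tail_small_signal
    {Ω : Type*} [MeasurableSpace Ω] (μ : Measure Ω) [IsProbabilityMeasure μ]
    (L : ℕ) (hL : 1 ≤ L) (z : Fin L → Ω → ℝ)
    (hmeas : ∀ i, Measurable (z i))
    (hindep : iIndepFun z μ)
    (hgauss : ∀ i, Measure.map (z i) μ = gaussianReal 0 1)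
    (σ : ℝ) (hσ : 0 < σ) (θ : Fin L → ℝ) (τ : ℝ) (hτ : 0 < τ)
    (lamS lamT : ℝ) (hlamS1 : 1 < lamS) (hlamS : lamS - Real.log lamS = 5)
    (hlamT1 : 1 < lamT) (hlamT : lamT - Real.log lamT = 1 + 4 * τ / (1 + 2 * τ))
    (hθ : ∑ i, (θ i) ^ 2 ≤ (Real.sqrt lamS - Real.sqrt lamT) ^ 2 * L * σ ^ 2) :
    μ {ω | lamS * L * σ ^ 2 ≤ ∑ i, (θ i + σ * z i ω) ^ 2} ≤
        μ {ω | lamT * L ≤ ∑ i, (z i ω) ^ 2} ∧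
      (μ {ω | lamT * L ≤ ∑ i, (z i ω) ^ 2}).toReal ≤
        (1 / 2) * Real.exp (-(2 * τ / (1 + 2 * τ)) * L) := by
  have hTS : lamT ≤ lamS := BlockTailAux.lamT_le_lamS hτ hlamS1 hlamS hlamT1 hlamT
  have hT0 : (0:ℝ) < lamT := lt_trans one_pos hlamT1
  have hL0 : (0:ℝ) < (L:ℝ) := by
    exact_mod_cast Nat.lt_of_lt_of_le Nat.zero_lt_one hL
  constructor
  · apply measure_mono
    intro ω hω
    exact BlockTailAux.minkowski_step L hσ θ (fun i => z i ω) hT0.le hTS hθ hω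
  -- Part 2
  have hsm : MeasurableSet {x : Fin L → ℝ | lamT * L ≤ ∑ i, (x i)^2} := by
    apply measurableSet_le measurable_const
    exact Finset.measurable_sum _ (fun i _ => (measurable_pi_apply i).pow_const 2)
  set ν : Measure (Fin L → ℝ) := Measure.pi (fun _ : Fin L => gaussianReal 0 1) with hν
  have hmap := BlockTailAux.map_eq_pi μ L z hmeas hindep hgauss
  have hev : μ {ω | lamT * L ≤ ∑ i, (z i ω)^2} = ν {x | lamT * L ≤ ∑ i, (x i)^2} := by
    rw [hν, ← hmap, Measure.map_apply (measurable_pi_lambda _ hmeas) hsm]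
    rfl
  rw [hev]
  set K : ℝ := ((L:ℝ) * (volume (Metric.ball (0 : EuclideanSpace ℝ (Fin L)) 1)).toReal
      * ((Real.sqrt (2*π))⁻¹)^L) with hK
  have hK0 : 0 ≤ K := by
    rw [hK]
    positivity
  have hc : (0:ℝ) ≤ lamT * L := by positivity
  have hkey : (ν {x | lamT * L ≤ ∑ i, (x i)^2}).toReal
      = K * BlockTailAux.Jfun (L-1) (Real.sqrt (lamT * L)) :=
    BlockTailAux.key_repr L hL hc
  -- normalization
  have huniv : {x : Fin L → ℝ | (0:ℝ) ≤ ∑ i, (x i)^2} = Set.univ :=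
    Set.eq_univ_of_forall (fun x => show (0:ℝ) ≤ ∑ i, (x i)^2 from Finset.sum_nonneg (fun i _ => sq_nonneg _))
  have hone : (1:ℝ) = K * BlockTailAux.Jfun (L-1) 0 := by
    have h0 := BlockTailAux.key_repr L hL (le_refl (0:ℝ))
    rw [huniv, Real.sqrt_zero] at h0
    rw [← h0]
    simp [hν]
  -- splitting and scaling bounds
  have hsL : 0 < Real.sqrt (L:ℝ) := Real.sqrt_pos.2 hL0
  have hb2 : ((L-1 : ℕ):ℝ) + 1 = (Real.sqrt (L:ℝ))^2 := by
    rw [Real.sq_sqrt hL0.le, Nat.cast_sub hL]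
    push_cast
    ring
  have htail := BlockTailAux.two_tail_le (L-1) hsL hb2
  have hscale := BlockTailAux.scale_bound L hL hlamT1
  have hsplit : Real.sqrt (lamT * L) = Real.sqrt lamT * Real.sqrt (L:ℝ) :=
    Real.sqrt_mul hT0.le _
  have hJT : BlockTailAux.Jfun (L-1) (Real.sqrt (lamT * L))
      = ∫ y in Set.Ioi (Real.sqrt lamT * Real.sqrt (L:ℝ)), BlockTailAux.hfun (L-1) y := by
    rw [hsplit]
    exact BlockTailAux.Jfun_eq_tail (L-1) (by positivity)
  have hJ0 : BlockTailAux.Jfun (L-1) 0 = ∫ y in Set.Ioi (0:ℝ), BlockTailAux.hfun (L-1) y :=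
    BlockTailAux.Jfun_zero (L-1)
  set C1 : ℝ := (Real.sqrt lamT)^L * Real.exp (-(lamT - 1) * L / 2) with hC1
  have hC10 : 0 ≤ C1 := by
    rw [hC1]
    positivity
  have hchain : BlockTailAux.Jfun (L-1) (Real.sqrt (lamT * L))
      ≤ C1 * (BlockTailAux.Jfun (L-1) 0 / 2) := by
    rw [hJT, hJ0] at *
    calc ∫ y in Set.Ioi (Real.sqrt lamT * Real.sqrt (L:ℝ)), BlockTailAux.hfun (L-1) y
        ≤ C1 * ∫ y in Set.Ioi (Real.sqrt (L:ℝ)), BlockTailAux.hfun (L-1) y := hscale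
      _ ≤ C1 * ((∫ y in Set.Ioi (0:ℝ), BlockTailAux.hfun (L-1) y) / 2) := by
          apply mul_le_mul_of_nonneg_left _ hC10
          linarith [htail]
  calc (ν {x | lamT * L ≤ ∑ i, (x i)^2}).toReal
      = K * BlockTailAux.Jfun (L-1) (Real.sqrt (lamT * L)) := hkey
    _ ≤ K * (C1 * (BlockTailAux.Jfun (L-1) 0 / 2)) := mul_le_mul_of_nonneg_left hchain hK0
    _ = (1/2) * C1 * (K * BlockTailAux.Jfun (L-1) 0) := by ring
    _ = (1/2) * C1 := by rw [← hone, mul_one]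
    _ = (1/2) * Real.exp (-(2 * τ / (1 + 2 * τ)) * L) := by
        rw [hC1, BlockTailAux.const_eq L hτ hlamT1 hlamT]
end
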